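/- arXiv:0807.2847 — 4 statements merged into one kernel-verified Lean document; each statement's English description precedes it below -/
import Mathlib

section
/- Let L be a finite extension of Q_p with absolute value |·|, and let g be a finite-dimensional Lie algebra over L with ordered basis x_1,...,x_d whose structure constants lie in the ring of integers of L. For real r > 1, define a norm on the universal enveloping algebra U(g) by ||Σ_α d_α X^α||_r = sup_α |d_α| r^{|α|}, where X^α = x_1^{α_1}···x_d^{α_d} ranges over the PBW basis. Then ||·||_r is submultiplicative: ||uv||_r ≤ ||u||_r ||v||_r for all u, v ∈ U(g). -/
open scoped NNReal

/-- The PBW-norm `‖Σ_α d_α X^α‖_r = sup_α ‖d_α‖ r^{|α|}` on the universal enveloping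
algebra, expressed via a PBW basis `b` indexed by multi-indices `α : Fin d →₀ ℕ`. -/
noncomputable def pbwNorm {L : Type*} [NontriviallyNormedField L] {𝔤 : Type*}
    [LieRing 𝔤] [LieAlgebra L 𝔤] {d : ℕ}
    (b : Module.Basis (Fin d →₀ ℕ) L (UniversalEnvelopingAlgebra L 𝔤)) (r : ℝ≥0)
    (u : UniversalEnvelopingAlgebra L 𝔤) : ℝ≥0 :=
  (b.repr u).support.sup fun α => ‖b.repr u α‖₊ * r ^ (α.sum fun _ n => n)

section PbwAux

open UniversalEnvelopingAlgebra

/-- total degree of a multi-index -/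
def pbwDeg {d : ℕ} (γ : Fin d →₀ ℕ) : ℕ := γ.sum fun _ n => n

lemma pbwDeg_add_single {d : ℕ} (γ : Fin d →₀ ℕ) (i : Fin d) :
    pbwDeg (γ + Finsupp.single i 1) = pbwDeg γ + 1 := by
  unfold pbwDeg
  rw [Finsupp.sum_add_index' (fun _ => rfl) (fun _ _ _ => rfl),
    Finsupp.sum_single_index rfl]

/-- The word (in increasing order) associated to a multi-index. -/
def pbwWord {d : ℕ} (γ : Fin d →₀ ℕ) : List (Fin d) :=
  ((List.finRange d).map fun a => List.replicate (γ a) a).flatten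

lemma pbwWord_length {d : ℕ} (γ : Fin d →₀ ℕ) : (pbwWord γ).length = pbwDeg γ := by
  unfold pbwWord pbwDeg
  rw [List.length_flatten, Finsupp.sum_fintype _ _ (fun _ => rfl), Fin.sum_univ_def,
    List.map_map]
  simp [Function.comp_def]

lemma finRange_decomp {d : ℕ} (i : Fin d) :
    List.finRange d = (List.finRange d).take i.val ++ i :: (List.finRange d).drop (i.val + 1) := by
  have h : i.val < (List.finRange d).length := by simp [i.isLt]
  conv_lhs => rw [← List.take_append_drop i.val (List.finRange d)]
  rw [List.drop_eq_getElem_cons h, List.getElem_finRange]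
  rfl

lemma mem_take_finRange {d : ℕ} {i : Fin d} {a : Fin d}
    (ha : a ∈ (List.finRange d).take i.val) : a < i := by
  rcases List.mem_iff_getElem.mp ha with ⟨n, hn, hna⟩
  have h1 : n < i.val := lt_of_lt_of_le hn (by simp [List.length_take])
  have h2 : n < (List.finRange d).length := by
    simpa using lt_of_lt_of_le h1 (le_of_lt i.isLt)
  rw [List.getElem_take, List.getElem_finRange] at hna
  have : a.val = n := by rw [← hna]; rfl
  exact Fin.lt_def.mpr (by omega)

lemma pbwWord_cons {d : ℕ} (γ : Fin d →₀ ℕ) (i : Fin d)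
    (h : ∀ l, l < i → γ l = 0) :
    pbwWord (γ + Finsupp.single i 1) = i :: pbwWord γ := by
  classical
  unfold pbwWord
  have hd := finRange_decomp i
  have hnodup : i ∉ (List.finRange d).drop (i.val + 1) := by
    have := List.nodup_finRange d
    rw [hd] at this
    have := List.Nodup.of_append_right this
    exact (List.nodup_cons.mp this).1
  rw [hd]
  simp only [List.map_append, List.map_cons, List.flatten_append, List.flatten_cons]
  have htake : ∀ (δ : Fin d →₀ ℕ), (∀ l, l < i → δ l = 0) →
      ((List.take i.val (List.finRange d)).map fun a => List.replicate (δ a) a).flatten = [] := by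
    intro δ hδ
    rw [List.flatten_eq_nil_iff]
    intro l hl
    rcases List.mem_map.mp hl with ⟨a, ha, rfl⟩
    rw [hδ a (mem_take_finRange ha)]
    rfl
  have h1 : ∀ l, l < i → (γ + Finsupp.single i 1 : Fin d →₀ ℕ) l = 0 := by
    intro l hl
    rw [Finsupp.add_apply, h l hl, Finsupp.single_apply, if_neg (Fin.ne_of_gt hl)]
    rfl
  rw [htake _ h1, htake _ h]
  have hdrop : ((List.drop (i.val + 1) (List.finRange d)).map
        fun a => List.replicate ((γ + Finsupp.single i 1 : Fin d →₀ ℕ) a) a) =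
      ((List.drop (i.val + 1) (List.finRange d)).map fun a => List.replicate (γ a) a) := by
    apply List.map_congr_left
    intro a ha
    have hai : a ≠ i := fun hai => hnodup (hai ▸ ha)
    rw [Finsupp.add_apply, Finsupp.single_apply, if_neg (Ne.symm hai), add_zero]
  rw [hdrop]
  have hi : (γ + Finsupp.single i 1 : Fin d →₀ ℕ) i = γ i + 1 := by
    rw [Finsupp.add_apply, Finsupp.single_apply, if_pos rfl]
  rw [hi, List.replicate_succ]
  simp

variable {L : Type*} [NontriviallyNormedField L] {𝔤 : Type*}
    [LieRing 𝔤] [LieAlgebra L 𝔤] {d : ℕ}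

/-- The monomial associated to a word. -/
noncomputable def pbwMono (bg : Module.Basis (Fin d) L 𝔤) (l : List (Fin d)) :
    UniversalEnvelopingAlgebra L 𝔤 :=
  (l.map fun i => (ι L (bg i) : UniversalEnvelopingAlgebra L 𝔤)).prod

lemma pbwMono_nil (bg : Module.Basis (Fin d) L 𝔤) : pbwMono bg [] = 1 := rfl

lemma pbwMono_cons (bg : Module.Basis (Fin d) L 𝔤) (a : Fin d) (l : List (Fin d)) :
    pbwMono bg (a :: l) = ι L (bg a) * pbwMono bg l := by
  simp [pbwMono]

section withB

variable (bg : Module.Basis (Fin d) L 𝔤)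
    (b : Module.Basis (Fin d →₀ ℕ) L (UniversalEnvelopingAlgebra L 𝔤))
    (hb : ∀ α : Fin d →₀ ℕ,
      b α = ((List.finRange d).map fun i =>
        (UniversalEnvelopingAlgebra.ι L (bg i) : UniversalEnvelopingAlgebra L 𝔤) ^ α i).prod)

include hb in
lemma b_eq_pbwMono (γ : Fin d →₀ ℕ) : b γ = pbwMono bg (pbwWord γ) := by
  rw [hb γ]
  unfold pbwMono pbwWord
  rw [List.map_flatten, List.prod_flatten, List.map_map, List.map_map]
  congr 1
  apply List.map_congr_left
  intro a _
  simp [Function.comp_def, List.map_replicate, List.prod_replicate]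

include hb in
lemma mul_b_of_lt (i : Fin d) (γ : Fin d →₀ ℕ) (h : ∀ l, l < i → γ l = 0) :
    ι L (bg i) * b γ = b (γ + Finsupp.single i 1) := by
  rw [b_eq_pbwMono bg b hb, b_eq_pbwMono bg b hb, pbwWord_cons γ i h, pbwMono_cons]

end withB

variable (b : Module.Basis (Fin d →₀ ℕ) L (UniversalEnvelopingAlgebra L 𝔤)) (r : ℝ≥0)

lemma pbwNorm_le_iff {u : UniversalEnvelopingAlgebra L 𝔤} {C : ℝ≥0} :
    pbwNorm b r u ≤ C ↔ ∀ α, ‖b.repr u α‖₊ * r ^ pbwDeg α ≤ C := by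
  constructor
  · intro h α
    by_cases hα : α ∈ (b.repr u).support
    · exact le_trans (Finset.le_sup (f := fun α => ‖b.repr u α‖₊ * r ^ pbwDeg α) hα) h
    · simp [Finsupp.notMem_support_iff.mp hα]
  · intro h
    exact Finset.sup_le fun α _ => h α

lemma pbwNorm_term_le (u : UniversalEnvelopingAlgebra L 𝔤) (α : Fin d →₀ ℕ) :
    ‖b.repr u α‖₊ * r ^ pbwDeg α ≤ pbwNorm b r u :=
  (pbwNorm_le_iff b r).mp le_rfl α

lemma pbwNorm_zero : pbwNorm b r (0 : UniversalEnvelopingAlgebra L 𝔤) = 0 := by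
  simp [pbwNorm]

lemma pbwNorm_basis_le (δ : Fin d →₀ ℕ) : pbwNorm b r (b δ) ≤ r ^ pbwDeg δ := by
  rw [pbwNorm_le_iff]
  intro α
  rw [Module.Basis.repr_self, Finsupp.single_apply]
  by_cases h : δ = α
  · subst h; simp
  · simp [h]

lemma pbwNorm_smul_le (c : L) (u : UniversalEnvelopingAlgebra L 𝔤) :
    pbwNorm b r (c • u) ≤ ‖c‖₊ * pbwNorm b r u := by
  rw [pbwNorm_le_iff]
  intro α
  rw [map_smul, Finsupp.smul_apply, smul_eq_mul, nnnorm_mul, mul_assoc]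
  exact mul_le_mul_right (pbwNorm_term_le b r u α) _

variable [IsUltrametricDist L]

lemma pbwNorm_add_le_max (u v : UniversalEnvelopingAlgebra L 𝔤) :
    pbwNorm b r (u + v) ≤ max (pbwNorm b r u) (pbwNorm b r v) := by
  rw [pbwNorm_le_iff]
  intro α
  rw [map_add, Finsupp.add_apply]
  calc ‖b.repr u α + b.repr v α‖₊ * r ^ pbwDeg α
      ≤ max ‖b.repr u α‖₊ ‖b.repr v α‖₊ * r ^ pbwDeg α :=
        mul_le_mul_left (IsUltrametricDist.nnnorm_add_le_max _ _) _
    _ ≤ max (pbwNorm b r u) (pbwNorm b r v) := by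
        rcases max_cases ‖b.repr u α‖₊ ‖b.repr v α‖₊ with ⟨h1, _⟩ | ⟨h1, _⟩ <;> rw [h1]
        · exact le_max_of_le_left (pbwNorm_term_le b r u α)
        · exact le_max_of_le_right (pbwNorm_term_le b r v α)

lemma pbwNorm_sum_le {ι' : Type*} (s : Finset ι') (f : ι' → UniversalEnvelopingAlgebra L 𝔤)
    {C : ℝ≥0} (h : ∀ a ∈ s, pbwNorm b r (f a) ≤ C) :
    pbwNorm b r (∑ a ∈ s, f a) ≤ C := by
  classical
  induction s using Finset.induction_on with
  | empty => simp [pbwNorm_zero]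
  | insert a s ha ih =>
    rw [Finset.sum_insert ha]
    refine le_trans (pbwNorm_add_le_max b r _ _) (max_le ?_ ?_)
    · exact h a (Finset.mem_insert_self a s)
    · exact ih fun x hx => h x (Finset.mem_insert_of_mem hx)

end PbwAux

section PbwKey

open UniversalEnvelopingAlgebra

attribute [local instance 100] LieRing.ofAssociativeRing

variable {L : Type*} [NontriviallyNormedField L] [IsUltrametricDist L] {𝔤 : Type*}
    [LieRing 𝔤] [LieAlgebra L 𝔤] {d : ℕ}
    (bg : Module.Basis (Fin d) L 𝔤)
    (hint : ∀ i j k, ‖bg.repr ⁅bg i, bg j⁆ k‖ ≤ 1)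
    (b : Module.Basis (Fin d →₀ ℕ) L (UniversalEnvelopingAlgebra L 𝔤))
    (hb : ∀ α : Fin d →₀ ℕ,
      b α = ((List.finRange d).map fun i =>
        (UniversalEnvelopingAlgebra.ι L (bg i) : UniversalEnvelopingAlgebra L 𝔤) ^ α i).prod)
    (r : ℝ≥0) (hr : 1 ≤ r)

include hint hb hr in
lemma pbw_key : ∀ N : ℕ, ∀ (i : Fin d) (γ : Fin d →₀ ℕ), (d + 1) * pbwDeg γ + i.val ≤ N →
    (ι L (bg i) * b γ ∈
      Submodule.span L (⇑b '' {δ : Fin d →₀ ℕ | pbwDeg δ ≤ pbwDeg γ + 1}) ∧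
     pbwNorm b r (ι L (bg i) * b γ) ≤ r ^ (pbwDeg γ + 1)) := by
  classical
  intro N
  induction N using Nat.strong_induction_on with
  | _ N IH =>
  intro i γ hN
  set n := pbwDeg γ with hn
  rcases Finset.eq_empty_or_nonempty (γ.support.filter (· < i)) with hs | hs
  · -- case 1 : all indices below i vanish
    have h0 : ∀ l, l < i → γ l = 0 := by
      intro l hl
      by_contra hne
      exact Finset.notMem_empty l (hs ▸ Finset.mem_filter.mpr
        ⟨Finsupp.mem_support_iff.mpr hne, by simpa using hl⟩)
    have heq := mul_b_of_lt bg b hb i γ h0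
    rw [heq]
    constructor
    · exact Submodule.subset_span ⟨γ + Finsupp.single i 1, by
        simp only [Set.mem_setOf_eq, pbwDeg_add_single]; exact le_rfl, rfl⟩
    · calc pbwNorm b r (b (γ + Finsupp.single i 1))
          ≤ r ^ pbwDeg (γ + Finsupp.single i 1) := pbwNorm_basis_le b r _
        _ = r ^ (n + 1) := by rw [pbwDeg_add_single]
  · -- case 2 : straighten
    set j := (γ.support.filter (· < i)).min' hs with hj
    have hjmem : j ∈ γ.support.filter (· < i) := Finset.min'_mem _ hs
    have hji : j < i := by simpa using (Finset.mem_filter.mp hjmem).2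
    have hjsupp : γ j ≠ 0 := Finsupp.mem_support_iff.mp (Finset.mem_filter.mp hjmem).1
    set γ' : Fin d →₀ ℕ := γ - Finsupp.single j 1 with hγ'
    have hmin : ∀ l, l < j → γ l = 0 := by
      intro l hl
      by_contra hne
      have : l ∈ γ.support.filter (· < i) :=
        Finset.mem_filter.mpr ⟨Finsupp.mem_support_iff.mpr hne, by
          simpa using lt_trans hl hji⟩
      exact absurd (Finset.min'_le _ _ this) (not_le.mpr hl)
    have hγ'lt : ∀ l, l < j → γ' l = 0 := by
      intro l hl
      rw [hγ', Finsupp.tsub_apply, hmin l hl]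
      simp
    have hsum : γ' + Finsupp.single j 1 = γ := by
      ext a
      rw [Finsupp.add_apply, hγ', Finsupp.tsub_apply, Finsupp.single_apply]
      by_cases ha : j = a
      · subst ha
        rw [if_pos rfl]
        have := hjsupp
        omega
      · simp [ha]
    have hdeg : n = pbwDeg γ' + 1 := by
      rw [hn, ← hsum, pbwDeg_add_single]
    have hmul : (d + 1) * n = (d + 1) * pbwDeg γ' + (d + 1) := by
      rw [hdeg, Nat.mul_succ]
    have hbγ : b γ = ι L (bg j) * b γ' := by
      conv_lhs => rw [← hsum]
      rw [← mul_b_of_lt bg b hb j γ' hγ'lt]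
    -- the two pieces
    have hcomm : ι L (bg i) * (ι L (bg j) * b γ') =
        ι L (bg j) * (ι L (bg i) * b γ') + ι L ⁅bg i, bg j⁆ * b γ' := by
      have h1 := (ι L (L := 𝔤)).map_lie (bg i) (bg j)
      rw [Ring.lie_def] at h1
      rw [← mul_assoc, ← mul_assoc, ← add_mul]
      congr 1
      rw [h1]
      abel
    rw [hbγ, hcomm]
    have hnN : (d + 1) * n + i.val ≤ N := hN
    -- Term 2 : the bracket term
    have hterm2 : ι L ⁅bg i, bg j⁆ * b γ' ∈
        Submodule.span L (⇑b '' {δ : Fin d →₀ ℕ | pbwDeg δ ≤ n + 1}) ∧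
        pbwNorm b r (ι L ⁅bg i, bg j⁆ * b γ') ≤ r ^ (n + 1) := by
      have hrepr : ⁅bg i, bg j⁆ = ∑ k, bg.repr ⁅bg i, bg j⁆ k • bg k :=
        (bg.sum_repr _).symm
      have hexp0 : ι L ⁅bg i, bg j⁆ = ∑ k, bg.repr ⁅bg i, bg j⁆ k • ι L (bg k) := by
        conv_lhs => rw [hrepr]
        rw [← LieHom.coe_toLinearMap, map_sum]
        simp only [map_smul, LieHom.coe_toLinearMap]
      have hexp : ι L ⁅bg i, bg j⁆ * b γ' =
          ∑ k, bg.repr ⁅bg i, bg j⁆ k • (ι L (bg k) * b γ') := by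
        rw [hexp0, Finset.sum_mul]
        congr 1
        ext k
        rw [smul_mul_assoc]
      rw [hexp]
      have hK : ∀ k : Fin d, ι L (bg k) * b γ' ∈
          Submodule.span L (⇑b '' {δ : Fin d →₀ ℕ | pbwDeg δ ≤ n}) ∧
          pbwNorm b r (ι L (bg k) * b γ') ≤ r ^ n := by
        intro k
        have hM : (d + 1) * pbwDeg γ' + k.val < N := by
          have hk := k.isLt
          omega
        have := IH _ hM k γ' le_rfl
        rw [← hdeg] at this
        exact this
      constructor
      · apply Submodule.sum_mem
        intro k _
        apply Submodule.smul_mem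
        refine Submodule.span_mono (Set.image_mono ?_) (hK k).1
        intro δ hδ
        exact le_trans hδ (Nat.le_succ n)
      · apply pbwNorm_sum_le
        intro k _
        calc pbwNorm b r (bg.repr ⁅bg i, bg j⁆ k • (ι L (bg k) * b γ'))
            ≤ ‖bg.repr ⁅bg i, bg j⁆ k‖₊ * pbwNorm b r (ι L (bg k) * b γ') :=
              pbwNorm_smul_le b r _ _
          _ ≤ 1 * r ^ n := by
              apply mul_le_mul'
              · rw [← NNReal.coe_le_coe]; exact hint i j k
              · exact (hK k).2
          _ = r ^ n := one_mul _
          _ ≤ r ^ (n + 1) := pow_le_pow_right' hr (Nat.le_succ n)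
    -- Term 1 : straightened term
    have hterm1 : ι L (bg j) * (ι L (bg i) * b γ') ∈
        Submodule.span L (⇑b '' {δ : Fin d →₀ ℕ | pbwDeg δ ≤ n + 1}) ∧
        pbwNorm b r (ι L (bg j) * (ι L (bg i) * b γ')) ≤ r ^ (n + 1) := by
      set w := ι L (bg i) * b γ' with hw
      have hMw : (d + 1) * pbwDeg γ' + i.val < N := by omega
      have hw' := IH _ hMw i γ' le_rfl
      rw [← hdeg, ← hw] at hw'
      obtain ⟨hwmem, hwnorm⟩ := hw'
      have hsupp : ∀ δ ∈ (b.repr w).support, pbwDeg δ ≤ n :=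
        fun δ hδ => (Module.Basis.mem_span_image b).mp hwmem hδ
      have hwexp : ι L (bg j) * w =
          ∑ δ ∈ (b.repr w).support, b.repr w δ • (ι L (bg j) * b δ) := by
        conv_lhs => rw [← b.linearCombination_repr w, Finsupp.linearCombination_apply,
          Finsupp.sum]
        rw [Finset.mul_sum]
        congr 1
        ext δ
        rw [mul_smul_comm]
      rw [hwexp]
      have hD : ∀ δ ∈ (b.repr w).support, ι L (bg j) * b δ ∈
          Submodule.span L (⇑b '' {ε : Fin d →₀ ℕ | pbwDeg ε ≤ pbwDeg δ + 1}) ∧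
          pbwNorm b r (ι L (bg j) * b δ) ≤ r ^ (pbwDeg δ + 1) := by
        intro δ hδ
        have hM : (d + 1) * pbwDeg δ + j.val < N := by
          have h1 : pbwDeg δ ≤ n := hsupp δ hδ
          have h2 : j.val < i.val := hji
          have h3 : (d + 1) * pbwDeg δ ≤ (d + 1) * n := Nat.mul_le_mul_left _ h1
          calc (d + 1) * pbwDeg δ + j.val < (d + 1) * n + i.val :=
                add_lt_add_of_le_of_lt h3 h2
            _ ≤ N := hN
        exact IH _ hM j δ le_rfl
      constructor
      · apply Submodule.sum_mem
        intro δ hδ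
        apply Submodule.smul_mem
        refine Submodule.span_mono (Set.image_mono ?_) (hD δ hδ).1
        have hle : pbwDeg δ + 1 ≤ n + 1 := Nat.succ_le_succ (hsupp δ hδ)
        intro ε hε
        exact le_trans hε hle
      · apply pbwNorm_sum_le
        intro δ hδ
        calc pbwNorm b r (b.repr w δ • (ι L (bg j) * b δ))
            ≤ ‖b.repr w δ‖₊ * pbwNorm b r (ι L (bg j) * b δ) := pbwNorm_smul_le b r _ _
          _ ≤ ‖b.repr w δ‖₊ * r ^ (pbwDeg δ + 1) := mul_le_mul_right (hD δ hδ).2 _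
          _ = (‖b.repr w δ‖₊ * r ^ pbwDeg δ) * r := by rw [pow_succ, mul_assoc]
          _ ≤ pbwNorm b r w * r := mul_le_mul_left (pbwNorm_term_le b r w δ) _
          _ ≤ r ^ n * r := mul_le_mul_left hwnorm _
          _ = r ^ (n + 1) := (pow_succ r n).symm
    exact ⟨Submodule.add_mem _ hterm1.1 hterm2.1,
      le_trans (pbwNorm_add_le_max b r _ _) (max_le hterm1.2 hterm2.2)⟩

include hint hb hr in
lemma pbw_gen_mul (i : Fin d) (v : UniversalEnvelopingAlgebra L 𝔤) :
    pbwNorm b r (ι L (bg i) * v) ≤ r * pbwNorm b r v := by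
  classical
  have hexp : ι L (bg i) * v =
      ∑ δ ∈ (b.repr v).support, b.repr v δ • (ι L (bg i) * b δ) := by
    conv_lhs => rw [← b.linearCombination_repr v, Finsupp.linearCombination_apply,
      Finsupp.sum]
    rw [Finset.mul_sum]
    congr 1
    ext δ
    rw [mul_smul_comm]
  rw [hexp]
  apply pbwNorm_sum_le
  intro δ _
  have hkey := (pbw_key bg hint b hb r hr ((d + 1) * pbwDeg δ + i.val) i δ le_rfl).2
  calc pbwNorm b r (b.repr v δ • (ι L (bg i) * b δ))
      ≤ ‖b.repr v δ‖₊ * pbwNorm b r (ι L (bg i) * b δ) := pbwNorm_smul_le b r _ _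
    _ ≤ ‖b.repr v δ‖₊ * r ^ (pbwDeg δ + 1) := mul_le_mul_right hkey _
    _ = r * (‖b.repr v δ‖₊ * r ^ pbwDeg δ) := by rw [pow_succ]; ring
    _ ≤ r * pbwNorm b r v := mul_le_mul_right (pbwNorm_term_le b r v δ) _

include hint hb hr in
lemma pbw_mono_mul (l : List (Fin d)) (v : UniversalEnvelopingAlgebra L 𝔤) :
    pbwNorm b r (pbwMono bg l * v) ≤ r ^ l.length * pbwNorm b r v := by
  induction l with
  | nil => rw [pbwMono_nil, one_mul]; simp
  | cons a l ih =>
    rw [pbwMono_cons, mul_assoc]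
    calc pbwNorm b r (ι L (bg a) * (pbwMono bg l * v))
        ≤ r * pbwNorm b r (pbwMono bg l * v) := pbw_gen_mul bg hint b hb r hr a _
      _ ≤ r * (r ^ l.length * pbwNorm b r v) := mul_le_mul_right ih _
      _ = r ^ (a :: l).length * pbwNorm b r v := by
          rw [List.length_cons, pow_succ]; ring

end PbwKey

/-- for a finite extension `L` of `ℚ_p`, a finite-dimensional Lie algebra `𝔤`
over `L` with basis `bg` whose structure constants are integral, the PBW norm `‖·‖_r`
(`r > 1`) on `U(𝔤)` is submultiplicative. -/
theorem pbwNorm_mul_le {p : ℕ} [Fact (Nat.Prime p)]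
    (L : Type*) [NontriviallyNormedField L] [NormedAlgebra ℚ_[p] L]
    [FiniteDimensional ℚ_[p] L] [IsUltrametricDist L]
    (𝔤 : Type*) [LieRing 𝔤] [LieAlgebra L 𝔤] {d : ℕ}
    (bg : Module.Basis (Fin d) L 𝔤)
    (hint : ∀ i j k, ‖bg.repr ⁅bg i, bg j⁆ k‖ ≤ 1)
    (b : Module.Basis (Fin d →₀ ℕ) L (UniversalEnvelopingAlgebra L 𝔤))
    (hb : ∀ α : Fin d →₀ ℕ,
      b α = ((List.finRange d).map fun i =>
        (UniversalEnvelopingAlgebra.ι L (bg i) : UniversalEnvelopingAlgebra L 𝔤) ^ α i).prod)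
    (r : ℝ≥0) (hr : 1 < r) (u v : UniversalEnvelopingAlgebra L 𝔤) :
    pbwNorm b r (u * v) ≤ pbwNorm b r u * pbwNorm b r v := by
  classical
  have hr' : 1 ≤ r := le_of_lt hr
  have hexp : u * v = ∑ α ∈ (b.repr u).support, b.repr u α • (b α * v) := by
    conv_lhs => rw [← b.linearCombination_repr u, Finsupp.linearCombination_apply,
      Finsupp.sum]
    rw [Finset.sum_mul]
    congr 1
    ext α
    rw [smul_mul_assoc]
  rw [hexp]
  apply pbwNorm_sum_le
  intro α _
  have hmono : pbwNorm b r (b α * v) ≤ r ^ pbwDeg α * pbwNorm b r v := by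
    have := pbw_mono_mul bg hint b hb r hr' (pbwWord α) v
    rwa [← b_eq_pbwMono bg b hb, pbwWord_length] at this
  calc pbwNorm b r (b.repr u α • (b α * v))
      ≤ ‖b.repr u α‖₊ * pbwNorm b r (b α * v) := pbwNorm_smul_le b r _ _
    _ ≤ ‖b.repr u α‖₊ * (r ^ pbwDeg α * pbwNorm b r v) := mul_le_mul_right hmono _
    _ = (‖b.repr u α‖₊ * r ^ pbwDeg α) * pbwNorm b r v := by ring
    _ ≤ pbwNorm b r u * pbwNorm b r v := mul_le_mul_left (pbwNorm_term_le b r u α) _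
end

section
/- With notation as above (basis of g with integral structure constants, r > 1), the norm ||·||_r on U(g) is multiplicative: ||uv||_r = ||u||_r ||v||_r for all u, v ∈ U(g). In particular U(g) equipped with ||·||_r has no zero divisors. -/
set_option linter.unusedSectionVars false
set_option maxHeartbeats 1000000

open scoped NNReal

open scoped NNReal

namespace PbwAux

variable {L : Type*} [NontriviallyNormedField L] [IsUltrametricDist L]
  {𝔤 : Type*} [LieRing 𝔤] [LieAlgebra L 𝔤] {d : ℕ}

local notation "𝒰" => UniversalEnvelopingAlgebra L 𝔤

/-- total degree of a multi-index -/
def deg (α : Fin d →₀ ℕ) : ℕ := α.sum fun _ n => n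

lemma deg_add (α β : Fin d →₀ ℕ) : deg (α + β) = deg α + deg β :=
  Finsupp.sum_add_index' (fun _ => rfl) (fun _ _ _ => rfl)

lemma deg_single (i : Fin d) (n : ℕ) : deg (Finsupp.single i n) = n :=
  Finsupp.sum_single_index rfl

lemma deg_zero : deg (0 : Fin d →₀ ℕ) = 0 := Finsupp.sum_zero_index

lemma deg_eq_zero_iff (α : Fin d →₀ ℕ) : deg α = 0 ↔ α = 0 := by
  constructor
  · intro h
    ext i
    simp only [Finsupp.coe_zero, Pi.zero_apply]
    by_contra hi
    have hmem : i ∈ α.support := Finsupp.mem_support_iff.mpr hi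
    have : α i ≤ deg α := by
      unfold deg Finsupp.sum
      exact Finset.single_le_sum (fun _ _ => Nat.zero_le _) hmem
    omega
  · rintro rfl; exact deg_zero

section Order

variable {d : ℕ}

/-- degree-lexicographic ranking of multi-indices -/
def rho (α : Fin d →₀ ℕ) : Lex (ℕ × Lex (Fin d →₀ ℕ)) := toLex (deg α, toLex α)

lemma rho_inj : Function.Injective (rho (d := d)) := by
  intro a c h
  have h2 : (deg a, toLex a) = (deg c, toLex c) := congrArg ofLex h
  have h3 : toLex a = toLex c := (Prod.ext_iff.mp h2).2
  exact congrArg ofLex h3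

lemma rho_add_lt_left {α α' β : Fin d →₀ ℕ} (h : rho α < rho α') :
    rho (α + β) < rho (α' + β) := by
  rw [rho, rho, Prod.Lex.lt_iff] at h ⊢
  simp only [ofLex_toLex] at h ⊢
  rcases h with h | ⟨h1, h2⟩
  · left; rw [deg_add, deg_add]; omega
  · right
    refine ⟨by rw [deg_add, deg_add, h1], ?_⟩
    rw [toLex_add, toLex_add]
    exact add_lt_add_left h2 (toLex β)

lemma rho_add_lt_right {α β β' : Fin d →₀ ℕ} (h : rho β < rho β') :
    rho (α + β) < rho (α + β') := by
  rw [rho, rho, Prod.Lex.lt_iff] at h ⊢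
  simp only [ofLex_toLex] at h ⊢
  rcases h with h | ⟨h1, h2⟩
  · left; rw [deg_add, deg_add]; omega
  · right
    refine ⟨by rw [deg_add, deg_add, h1], ?_⟩
    rw [toLex_add, toLex_add]
    exact add_lt_add_right h2 (toLex α)

lemma rho_add_le_right {α β β' : Fin d →₀ ℕ} (h : rho β ≤ rho β') :
    rho (α + β) ≤ rho (α + β') := by
  rcases eq_or_lt_of_le h with heq | hlt
  · rw [rho_inj heq]
  · exact (rho_add_lt_right hlt).le

end Order

/-- `P n u`: all PBW coefficients of `u` have norm at most 1 and degree strictly below `n`. -/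
def P (b : Module.Basis (Fin d →₀ ℕ) L 𝒰) (n : ℕ) (u : 𝒰) : Prop :=
  ∀ γ, ‖b.repr u γ‖ ≤ 1 ∧ (b.repr u γ ≠ 0 → deg γ < n)

variable (b : Module.Basis (Fin d →₀ ℕ) L (UniversalEnvelopingAlgebra L 𝔤))

lemma P_zero (n : ℕ) : P b n 0 := by
  intro γ; simp

lemma P_mono {n m : ℕ} (h : n ≤ m) {u : 𝒰} (hu : P b n u) : P b m u := by
  intro γ
  exact ⟨(hu γ).1, fun h0 => lt_of_lt_of_le ((hu γ).2 h0) h⟩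

lemma P_add {n : ℕ} {u v : 𝒰} (hu : P b n u) (hv : P b n v) : P b n (u + v) := by
  intro γ
  constructor
  · rw [map_add, Finsupp.add_apply]
    exact (IsUltrametricDist.norm_add_le_max _ _).trans (max_le (hu γ).1 (hv γ).1)
  · intro h0
    rw [map_add, Finsupp.add_apply] at h0
    rcases eq_or_ne (b.repr u γ) 0 with h1 | h1
    · exact (hv γ).2 (by simpa [h1] using h0)
    · exact (hu γ).2 h1

lemma P_smul {n : ℕ} {c : L} (hc : ‖c‖ ≤ 1) {u : 𝒰} (hu : P b n u) : P b n (c • u) := by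
  intro γ
  rw [map_smul, Finsupp.smul_apply, smul_eq_mul]
  constructor
  · calc ‖c * b.repr u γ‖ = ‖c‖ * ‖b.repr u γ‖ := norm_mul _ _
      _ ≤ 1 * 1 := mul_le_mul hc (hu γ).1 (norm_nonneg _) zero_le_one
      _ = 1 := one_mul 1
  · intro h0
    exact (hu γ).2 fun h => h0 (by simp [h])

lemma P_basis {n : ℕ} {α : Fin d →₀ ℕ} (h : deg α < n) : P b n (b α) := by
  intro γ
  rw [b.repr_self, Finsupp.single_apply]
  constructor
  · split <;> simp
  · split
    · next heq => subst heq; exact fun _ => h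
    · simp

lemma P_sum {n : ℕ} {ι : Type*} (s : Finset ι) (f : ι → 𝒰)
    (hf : ∀ i ∈ s, P b n (f i)) : P b n (∑ i ∈ s, f i) := by
  classical
  induction s using Finset.induction_on with
  | empty => simpa using P_zero b n
  | insert a s hx ih =>
    next =>
      rw [Finset.sum_insert hx]
      exact P_add b (hf a (s.mem_insert_self a)) (ih fun i hi => hf i (Finset.mem_insert_of_mem hi))

lemma pbwNorm_def (r : ℝ≥0) (u : UniversalEnvelopingAlgebra L 𝔤) :
    pbwNorm b r u = (b.repr u).support.sup fun α => ‖b.repr u α‖₊ * r ^ deg α := rfl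

lemma coeff_le (r : ℝ≥0) (u : UniversalEnvelopingAlgebra L 𝔤) (γ : Fin d →₀ ℕ) :
    ‖b.repr u γ‖₊ * r ^ deg γ ≤ pbwNorm b r u := by
  by_cases h : γ ∈ (b.repr u).support
  · exact Finset.le_sup (f := fun α => ‖b.repr u α‖₊ * r ^ deg α) h
  · rw [Finsupp.notMem_support_iff.mp h]
    simp

lemma pbw_zero (r : ℝ≥0) : pbwNorm b r (0 : UniversalEnvelopingAlgebra L 𝔤) = 0 := by
  simp [pbwNorm]

lemma pbw_eq_zero_iff (r : ℝ≥0) (hr : 1 < r) (u : UniversalEnvelopingAlgebra L 𝔤) :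
    pbwNorm b r u = 0 ↔ u = 0 := by
  constructor
  · intro h
    by_contra hu
    have hrepr : b.repr u ≠ 0 := fun h0 => hu ((LinearEquiv.map_eq_zero_iff b.repr).mp h0)
    obtain ⟨γ, hγ⟩ := Finsupp.support_nonempty_iff.mpr hrepr
    have hpos : 0 < ‖b.repr u γ‖₊ * r ^ deg γ :=
      mul_pos (nnnorm_pos.mpr (Finsupp.mem_support_iff.mp hγ)) (pow_pos (zero_lt_one.trans hr) _)
    have := coeff_le b r u γ
    rw [h] at this
    exact absurd this (not_le.mpr hpos)
  · rintro rfl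
    exact pbw_zero b r

lemma pbw_basis (r : ℝ≥0) (α : Fin d →₀ ℕ) : pbwNorm b r (b α) = r ^ deg α := by
  rw [pbwNorm_def, b.repr_self, Finsupp.support_single_ne_zero _ one_ne_zero,
    Finset.sup_singleton, Finsupp.single_eq_same, nnnorm_one, one_mul]


variable (bg : Module.Basis (Fin d) L 𝔤)

/-- the generator `x_i` inside the universal enveloping algebra -/
noncomputable def X (i : Fin d) : UniversalEnvelopingAlgebra L 𝔤 :=
  UniversalEnvelopingAlgebra.ι L (bg i)

lemma mem_take_lt {a : Fin d} {n : ℕ} (h : a ∈ (List.finRange d).take n) : (a : ℕ) < n := by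
  obtain ⟨m, hm, heq⟩ := List.mem_iff_getElem.mp h
  have hlen : m < n := by
    have := hm
    simp only [List.length_take, List.length_finRange, lt_min_iff] at this
    exact this.1
  have : (List.take n (List.finRange d))[m] = (List.finRange d)[m]'(by
      simp only [List.length_take, List.length_finRange, lt_min_iff] at hm; simpa using hm.2) :=
    List.getElem_take
  rw [this] at heq
  rw [← heq]
  simpa using hlen

lemma mem_drop_ge {a : Fin d} {n : ℕ} (h : a ∈ (List.finRange d).drop n) : n ≤ (a : ℕ) := by
  obtain ⟨m, hm, heq⟩ := List.mem_iff_getElem.mp h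
  have hlt : n + m < d := by
    simpa [List.length_drop, List.length_finRange] using (Nat.add_lt_of_lt_sub' (by
      simpa [List.length_drop, List.length_finRange] using hm))
  have : (List.drop n (List.finRange d))[m] = (List.finRange d)[n + m]'(by
      simpa [List.length_finRange] using hlt) := by
    rw [List.getElem_drop]
  rw [this] at heq
  rw [← heq]
  simp

lemma drop_finRange_eq_cons (i : Fin d) :
    (List.finRange d).drop i.1 = i :: (List.finRange d).drop (i.1 + 1) := by
  rw [List.drop_eq_getElem_cons (by simpa using i.2)]
  congr 1
  apply Fin.ext
  simp

lemma prod_eq_head_mul (β : Fin d →₀ ℕ) (i : Fin d) (h : ∀ k, k < i → β k = 0) :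
    ((List.finRange d).map fun k => X bg k ^ β k).prod
      = X bg i ^ β i * (((List.finRange d).drop (i.1 + 1)).map fun k => X bg k ^ β k).prod := by
  conv_lhs => rw [← List.take_append_drop i.1 (List.finRange d)]
  rw [List.map_append, List.prod_append]
  have h1 : (((List.finRange d).take i.1).map fun k => X bg k ^ β k).prod = 1 := by
    apply List.prod_eq_one
    intro y hy
    obtain ⟨a, ha, rfl⟩ := List.mem_map.mp hy
    have : β a = 0 := h a (mem_take_lt ha)
    rw [this, pow_zero]
  rw [h1, one_mul, drop_finRange_eq_cons, List.map_cons, List.prod_cons]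

lemma prod_eq_mul_last (α : Fin d →₀ ℕ) (i : Fin d) (h : ∀ k, i < k → α k = 0) :
    ((List.finRange d).map fun k => X bg k ^ α k).prod
      = (((List.finRange d).take i.1).map fun k => X bg k ^ α k).prod * X bg i ^ α i := by
  conv_lhs => rw [← List.take_append_drop i.1 (List.finRange d)]
  rw [List.map_append, List.prod_append, drop_finRange_eq_cons, List.map_cons, List.prod_cons]
  have h1 : (((List.finRange d).drop (i.1 + 1)).map fun k => X bg k ^ α k).prod = 1 := by
    apply List.prod_eq_one
    intro y hy
    obtain ⟨a, ha, rfl⟩ := List.mem_map.mp hy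
    have hlt : i < a := by
      have := mem_drop_ge ha
      exact Fin.lt_def.mpr (by omega)
    rw [h a hlt, pow_zero]
  rw [h1, mul_one]

variable (hb : ∀ α : Fin d →₀ ℕ,
    b α = ((List.finRange d).map fun i => X bg i ^ α i).prod)

include hb

lemma b_zero : b 0 = 1 := by
  rw [hb]
  apply List.prod_eq_one
  intro y hy
  obtain ⟨a, _, rfl⟩ := List.mem_map.mp hy
  simp

lemma mul_monomial (i : Fin d) (β : Fin d →₀ ℕ) (h : ∀ k, k < i → β k = 0) :
    X bg i * b β = b (β + Finsupp.single i 1) := by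
  have h' : ∀ k, k < i → ((β + Finsupp.single i 1 : Fin d →₀ ℕ)) k = 0 := by
    intro k hk
    rw [Finsupp.add_apply, h k hk, Finsupp.single_apply, if_neg (ne_of_gt hk), add_zero]
  rw [hb β, hb (β + Finsupp.single i 1), prod_eq_head_mul bg β i h,
    prod_eq_head_mul bg _ i h']
  have e1 : (((List.finRange d).drop (i.1 + 1)).map fun k => X bg k ^ ((β + Finsupp.single i 1 : Fin d →₀ ℕ)) k)
      = ((List.finRange d).drop (i.1 + 1)).map fun k => X bg k ^ β k := by
    apply List.map_congr_left
    intro a ha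
    have hne : a ≠ i := by
      have := mem_drop_ge ha
      intro he; subst he; omega
    rw [Finsupp.add_apply, Finsupp.single_apply, if_neg (fun he => hne he.symm), add_zero]
  rw [e1]
  have e2 : ((β + Finsupp.single i 1 : Fin d →₀ ℕ)) i = β i + 1 := by
    rw [Finsupp.add_apply, Finsupp.single_eq_same]
  rw [e2, pow_succ', mul_assoc]

lemma monomial_mul (i : Fin d) (α : Fin d →₀ ℕ) (h : ∀ k, i < k → α k = 0) :
    b α * X bg i = b (α + Finsupp.single i 1) := by
  have h' : ∀ k, i < k → ((α + Finsupp.single i 1 : Fin d →₀ ℕ)) k = 0 := by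
    intro k hk
    rw [Finsupp.add_apply, h k hk, Finsupp.single_apply, if_neg (ne_of_lt hk), add_zero]
  rw [hb α, hb (α + Finsupp.single i 1), prod_eq_mul_last bg α i h,
    prod_eq_mul_last bg _ i h']
  have e1 : (((List.finRange d).take i.1).map fun k => X bg k ^ ((α + Finsupp.single i 1 : Fin d →₀ ℕ)) k)
      = ((List.finRange d).take i.1).map fun k => X bg k ^ α k := by
    apply List.map_congr_left
    intro a ha
    have hne : a ≠ i := by
      have := mem_take_lt ha
      intro he; subst he; omega
    rw [Finsupp.add_apply, Finsupp.single_apply, if_neg (fun he => hne he.symm), add_zero]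
  rw [e1]
  have e2 : ((α + Finsupp.single i 1 : Fin d →₀ ℕ)) i = α i + 1 := by
    rw [Finsupp.add_apply, Finsupp.single_eq_same]
  rw [e2, pow_succ, mul_assoc]

lemma repr_expand (u : UniversalEnvelopingAlgebra L 𝔤) :
    u = (b.repr u).sum fun γ c => c • b γ := by
  conv_lhs => rw [← b.linearCombination_repr u]
  rw [Finsupp.linearCombination_apply]

attribute [local instance] LieRing.ofAssociativeRing

omit hb in
lemma X_mul_X (i j : Fin d) :
    X bg i * X bg j = X bg j * X bg i + UniversalEnvelopingAlgebra.ι L ⁅bg i, bg j⁆ := by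
  have h := LieHom.map_lie (UniversalEnvelopingAlgebra.ι L (L := 𝔤)) (bg i) (bg j)
  rw [Ring.lie_def] at h
  rw [h]
  show X bg i * X bg j = X bg j * X bg i + (X bg i * X bg j - X bg j * X bg i)
  abel

omit hb in
lemma iota_eq_sum (y : 𝔤) :
    UniversalEnvelopingAlgebra.ι L y = (bg.repr y).sum fun k c => c • X bg k := by
  rw [show (UniversalEnvelopingAlgebra.ι L y : UniversalEnvelopingAlgebra L 𝔤)
    = (UniversalEnvelopingAlgebra.ι L (L := 𝔤)).toLinearMap y from rfl]
  conv_lhs => rw [← bg.linearCombination_repr y, Finsupp.linearCombination_apply]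
  rw [map_finsuppSum]
  apply Finsupp.sum_congr
  intro k _
  rw [map_smul]
  rfl

lemma mulGen {m : ℕ}
    (hA : ∀ β : Fin d →₀ ℕ, deg β ≤ m → ∀ i : Fin d,
      ∃ w, X bg i * b β = b (β + Finsupp.single i 1) + w ∧ P b (m + 1) w)
    (u : UniversalEnvelopingAlgebra L 𝔤) (hu : P b (m + 1) u) (i : Fin d) :
    P b (m + 2) (X bg i * u) := by
  have hrw : X bg i * u = (b.repr u).sum fun γ c => c • (X bg i * b γ) := by
    conv_lhs => rw [repr_expand b bg hb u]
    rw [Finsupp.mul_sum]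
    apply Finsupp.sum_congr
    intro γ _
    rw [mul_smul_comm]
  rw [hrw]
  apply P_sum
  intro γ hγ
  have hc : b.repr u γ ≠ 0 := Finsupp.mem_support_iff.mp hγ
  have hdeg : deg γ ≤ m := Nat.lt_succ_iff.mp ((hu γ).2 hc)
  obtain ⟨w, hw, hPw⟩ := hA γ hdeg i
  apply P_smul b (hu γ).1
  rw [hw]
  refine P_add b (P_basis b ?_) (P_mono b (by omega) hPw)
  rw [deg_add, deg_single]
  omega

lemma mainA (hint : ∀ i j k, ‖bg.repr ⁅bg i, bg j⁆ k‖ ≤ 1) :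
    ∀ n : ℕ, ∀ β : Fin d →₀ ℕ, deg β ≤ n → ∀ i : Fin d,
      ∃ w, X bg i * b β = b (β + Finsupp.single i 1) + w ∧ P b (n + 1) w := by
  intro n
  induction n using Nat.strong_induction_on with
  | _ n IH =>
  intro β hβ i
  by_cases hcase : ∀ k, k < i → β k = 0
  · exact ⟨0, by rw [mul_monomial b bg hb i β hcase, add_zero], P_zero b _⟩
  push_neg at hcase
  obtain ⟨k0, hk0lt, hk0ne⟩ := hcase
  have hne : β.support.Nonempty := ⟨k0, Finsupp.mem_support_iff.mpr hk0ne⟩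
  set j := β.support.min' hne with hj
  have hjmem : j ∈ β.support := β.support.min'_mem hne
  have hjne : β j ≠ 0 := Finsupp.mem_support_iff.mp hjmem
  have hji : j < i :=
    lt_of_le_of_lt (β.support.min'_le k0 (Finsupp.mem_support_iff.mpr hk0ne)) hk0lt
  set β₀ := β - Finsupp.single j 1 with hβ₀
  have hβsum : β₀ + Finsupp.single j 1 = β := by
    rw [hβ₀]
    exact tsub_add_cancel_of_le (Finsupp.single_le_iff.mpr (Nat.one_le_iff_ne_zero.mpr hjne))
  have hdegβ : deg β₀ + 1 = deg β := by rw [← hβsum, deg_add, deg_single]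
  have hm : deg β₀ < n := by omega
  have hβ₀low : ∀ k, k < j → β₀ k = 0 := by
    intro k hk
    have hknot : k ∉ β.support := fun hmem => absurd (β.support.min'_le k hmem) (not_le.mpr hk)
    have hk0 : β k = 0 := Finsupp.notMem_support_iff.mp hknot
    rw [hβ₀, Finsupp.tsub_apply, hk0]
    simp
  have hstep1 : b β = X bg j * b β₀ := by
    rw [mul_monomial b bg hb j β₀ hβ₀low, hβsum]
  obtain ⟨w1, hw1, hPw1⟩ := IH (deg β₀) hm β₀ le_rfl i
  have hcond : ∀ k, k < j → ((β₀ + Finsupp.single i 1 : Fin d →₀ ℕ)) k = 0 := by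
    intro k hk
    rw [Finsupp.add_apply, hβ₀low k hk, Finsupp.single_apply,
      if_neg (ne_of_gt (hk.trans hji)), add_zero]
  have hstep2 : X bg j * b (β₀ + Finsupp.single i 1) = b (β + Finsupp.single i 1) := by
    rw [mul_monomial b bg hb j _ hcond]
    congr 1
    rw [add_right_comm, hβsum]
  have hz : P b (n + 1) ((UniversalEnvelopingAlgebra.ι L ⁅bg i, bg j⁆) * b β₀) := by
    have hrw : (UniversalEnvelopingAlgebra.ι L ⁅bg i, bg j⁆) * b β₀
        = (bg.repr ⁅bg i, bg j⁆).sum fun k c => c • (X bg k * b β₀) := by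
      rw [iota_eq_sum bg, Finsupp.sum_mul]
      apply Finsupp.sum_congr
      intro k _
      rw [smul_mul_assoc]
    rw [hrw]
    apply P_sum
    intro k _
    apply P_smul b (hint i j k)
    obtain ⟨wk, hwk, hPwk⟩ := IH (deg β₀) hm β₀ le_rfl k
    rw [hwk]
    refine P_add b (P_basis b ?_) (P_mono b (by omega) hPwk)
    rw [deg_add, deg_single]
    omega
  have hxw1 : P b (n + 1) (X bg j * w1) := by
    have h2 := mulGen b bg hb (fun β' hβ' i' => IH (deg β₀) hm β' hβ' i') w1 hPw1 j
    exact P_mono b (by omega) h2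
  refine ⟨X bg j * w1 + (UniversalEnvelopingAlgebra.ι L ⁅bg i, bg j⁆) * b β₀, ?_,
    P_add b hxw1 hz⟩
  calc X bg i * b β = X bg i * (X bg j * b β₀) := by rw [← hstep1]
    _ = (X bg i * X bg j) * b β₀ := (mul_assoc _ _ _).symm
    _ = (X bg j * X bg i) * b β₀ + (UniversalEnvelopingAlgebra.ι L ⁅bg i, bg j⁆) * b β₀ := by
        rw [X_mul_X bg, add_mul]
    _ = X bg j * (X bg i * b β₀) + (UniversalEnvelopingAlgebra.ι L ⁅bg i, bg j⁆) * b β₀ := by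
        rw [mul_assoc]
    _ = X bg j * (b (β₀ + Finsupp.single i 1) + w1)
          + (UniversalEnvelopingAlgebra.ι L ⁅bg i, bg j⁆) * b β₀ := by rw [hw1]
    _ = (X bg j * b (β₀ + Finsupp.single i 1) + X bg j * w1)
          + (UniversalEnvelopingAlgebra.ι L ⁅bg i, bg j⁆) * b β₀ := by rw [mul_add]
    _ = b (β + Finsupp.single i 1)
          + (X bg j * w1 + (UniversalEnvelopingAlgebra.ι L ⁅bg i, bg j⁆) * b β₀) := by
        rw [hstep2, add_assoc]

lemma mainC (hint : ∀ i j k, ‖bg.repr ⁅bg i, bg j⁆ k‖ ≤ 1) :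
    ∀ α β : Fin d →₀ ℕ,
      ∃ w, b α * b β = b (α + β) + w ∧ P b (deg α + deg β) w := by
  suffices H : ∀ n, ∀ α β : Fin d →₀ ℕ, deg α ≤ n →
      ∃ w, b α * b β = b (α + β) + w ∧ P b (deg α + deg β) w by
    intro α β; exact H (deg α) α β le_rfl
  intro n
  induction n using Nat.strong_induction_on with
  | _ n IH =>
  intro α β hα
  by_cases h0 : α = 0
  · subst h0
    exact ⟨0, by rw [b_zero b bg hb, one_mul, zero_add, add_zero], P_zero b _⟩
  have hne : α.support.Nonempty := Finsupp.support_nonempty_iff.mpr h0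
  set i := α.support.max' hne with hi
  have himem : i ∈ α.support := α.support.max'_mem hne
  have hine : α i ≠ 0 := Finsupp.mem_support_iff.mp himem
  set α₀ := α - Finsupp.single i 1 with hα₀
  have hαsum : α₀ + Finsupp.single i 1 = α := by
    rw [hα₀]
    exact tsub_add_cancel_of_le (Finsupp.single_le_iff.mpr (Nat.one_le_iff_ne_zero.mpr hine))
  have hdegα : deg α₀ + 1 = deg α := by rw [← hαsum, deg_add, deg_single]
  have hm : deg α₀ < n := by omega
  have hhigh : ∀ k, i < k → α₀ k = 0 := by
    intro k hk
    have hknot : k ∉ α.support := fun hmem => absurd (α.support.le_max' k hmem) (not_le.mpr hk)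
    have hk0 : α k = 0 := Finsupp.notMem_support_iff.mp hknot
    rw [hα₀, Finsupp.tsub_apply, hk0]
    simp
  have hstep1 : b α = b α₀ * X bg i := by
    rw [monomial_mul b bg hb i α₀ hhigh, hαsum]
  obtain ⟨w1, hw1, hPw1⟩ := mainA b bg hb hint (deg β) β le_rfl i
  obtain ⟨w2, hw2, hPw2⟩ := IH (deg α₀) hm α₀ (β + Finsupp.single i 1) le_rfl
  have hsum2 : α₀ + (β + Finsupp.single i 1) = α + β := by
    rw [← hαsum, ← add_assoc, add_right_comm]
  have hdeg2 : deg α₀ + deg (β + Finsupp.single i 1) = deg α + deg β := by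
    rw [deg_add, deg_single]; omega
  have hw1P : P b (deg α + deg β) (b α₀ * w1) := by
    have hrw : b α₀ * w1 = (b.repr w1).sum fun γ c => c • (b α₀ * b γ) := by
      conv_lhs => rw [repr_expand b bg hb w1]
      rw [Finsupp.mul_sum]
      apply Finsupp.sum_congr
      intro γ _
      rw [mul_smul_comm]
    rw [hrw]
    apply P_sum
    intro γ hγ
    have hc : b.repr w1 γ ≠ 0 := Finsupp.mem_support_iff.mp hγ
    have hdegγ : deg γ ≤ deg β := Nat.lt_succ_iff.mp ((hPw1 γ).2 hc)
    apply P_smul b (hPw1 γ).1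
    obtain ⟨w3, hw3, hPw3⟩ := IH (deg α₀) hm α₀ γ le_rfl
    rw [hw3]
    refine P_add b (P_basis b ?_) (P_mono b (by omega) hPw3)
    rw [deg_add]
    omega
  refine ⟨w2 + b α₀ * w1, ?_, P_add b (P_mono b (by omega) hPw2) hw1P⟩
  calc b α * b β = (b α₀ * X bg i) * b β := by rw [← hstep1]
    _ = b α₀ * (X bg i * b β) := mul_assoc _ _ _
    _ = b α₀ * (b (β + Finsupp.single i 1) + w1) := by rw [hw1]
    _ = b α₀ * b (β + Finsupp.single i 1) + b α₀ * w1 := mul_add _ _ _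
    _ = (b (α₀ + (β + Finsupp.single i 1)) + w2) + b α₀ * w1 := by rw [hw2]
    _ = b (α + β) + (w2 + b α₀ * w1) := by rw [hsum2, add_assoc]



lemma lemD (hint : ∀ i j k, ‖bg.repr ⁅bg i, bg j⁆ k‖ ≤ 1) (α β γ : Fin d →₀ ℕ) :
    ‖b.repr (b α * b β) γ‖ ≤ 1 ∧
    (deg α + deg β ≤ deg γ → b.repr (b α * b β) γ = if γ = α + β then (1 : L) else 0) := by
  obtain ⟨w, hw, hPw⟩ := mainC b bg hb hint α β
  rw [hw, map_add, Finsupp.add_apply, b.repr_self]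
  constructor
  · refine (IsUltrametricDist.norm_add_le_max _ _).trans (max_le ?_ (hPw γ).1)
    rw [Finsupp.single_apply]
    split <;> simp
  · intro hdeg
    have hw0 : b.repr w γ = 0 := by
      by_contra h0
      exact absurd ((hPw γ).2 h0) (not_lt.mpr hdeg)
    rw [hw0, add_zero, Finsupp.single_apply]
    simp only [eq_comm]

lemma repr_mul (u v : UniversalEnvelopingAlgebra L 𝔤) (γ : Fin d →₀ ℕ) :
    b.repr (u * v) γ = ∑ α ∈ (b.repr u).support, ∑ β ∈ (b.repr v).support,
      b.repr u α * b.repr v β * b.repr (b α * b β) γ := by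
  have hmul : u * v = ∑ α ∈ (b.repr u).support, ∑ β ∈ (b.repr v).support,
      (b.repr u α * b.repr v β) • (b α * b β) := by
    conv_lhs => rw [repr_expand b bg hb u, repr_expand b bg hb v]
    rw [Finsupp.sum, Finsupp.sum, Finset.sum_mul]
    apply Finset.sum_congr rfl
    intro α _
    rw [Finset.mul_sum]
    apply Finset.sum_congr rfl
    intro β _
    rw [smul_mul_smul_comm]
  rw [hmul, map_sum, Finset.sum_apply']
  apply Finset.sum_congr rfl
  intro α _
  rw [map_sum, Finset.sum_apply']
  apply Finset.sum_congr rfl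
  intro β _
  rw [map_smul, Finsupp.smul_apply, smul_eq_mul]

lemma pbw_mul_le (hint : ∀ i j k, ‖bg.repr ⁅bg i, bg j⁆ k‖ ≤ 1) (r : ℝ≥0) (hr : 1 < r)
    (u v : UniversalEnvelopingAlgebra L 𝔤) :
    pbwNorm b r (u * v) ≤ pbwNorm b r u * pbwNorm b r v := by
  apply Finset.sup_le
  intro γ _
  have hr0 : (r : ℝ≥0) ^ deg γ ≠ 0 := pow_ne_zero _ (zero_lt_one.trans hr).ne'
  show ‖b.repr (u * v) γ‖₊ * r ^ deg γ ≤ _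
  rw [← le_div_iff₀ (pos_iff_ne_zero.mpr hr0), repr_mul b bg hb u v γ]
  apply IsUltrametricDist.nnnorm_sum_le_of_forall_le
  intro α _
  apply IsUltrametricDist.nnnorm_sum_le_of_forall_le
  intro β _
  rw [le_div_iff₀ (pos_iff_ne_zero.mpr hr0)]
  set D := b.repr (b α * b β) γ with hD
  rcases eq_or_ne D 0 with hD0 | hD0
  · simp [hD0]
  have hDle : ‖D‖₊ ≤ 1 := by
    rw [← NNReal.coe_le_coe]
    simpa using (lemD b bg hb hint α β γ).1
  have hdeg : deg γ ≤ deg α + deg β := by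
    by_contra hlt
    apply hD0
    rw [hD, (lemD b bg hb hint α β γ).2 (le_of_not_ge (fun h => hlt (by omega))), if_neg]
    intro he
    rw [he, deg_add] at hlt
    omega
  calc ‖b.repr u α * b.repr v β * D‖₊ * r ^ deg γ
      ≤ ‖b.repr u α‖₊ * ‖b.repr v β‖₊ * r ^ (deg α + deg β) := by
        rw [nnnorm_mul, nnnorm_mul]
        refine mul_le_mul' ?_ (pow_le_pow_right₀ hr.le hdeg)
        calc ‖b.repr u α‖₊ * ‖b.repr v β‖₊ * ‖D‖₊
            ≤ ‖b.repr u α‖₊ * ‖b.repr v β‖₊ * 1 := mul_le_mul_right hDle _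
          _ = ‖b.repr u α‖₊ * ‖b.repr v β‖₊ := mul_one _
    _ = (‖b.repr u α‖₊ * r ^ deg α) * (‖b.repr v β‖₊ * r ^ deg β) := by rw [pow_add]; ring
    _ ≤ pbwNorm b r u * pbwNorm b r v :=
        mul_le_mul' (coeff_le b r u α) (coeff_le b r v β)

omit hb in
lemma exists_maximizer (r : ℝ≥0) (u : UniversalEnvelopingAlgebra L 𝔤) (hu : u ≠ 0) :
    ∃ α₀ ∈ (b.repr u).support, ‖b.repr u α₀‖₊ * r ^ deg α₀ = pbwNorm b r u ∧
      ∀ α ∈ (b.repr u).support,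
        ‖b.repr u α‖₊ * r ^ deg α = pbwNorm b r u → rho α ≤ rho α₀ := by
  classical
  have hrepr : b.repr u ≠ 0 := fun h0 => hu ((LinearEquiv.map_eq_zero_iff b.repr).mp h0)
  have hne : (b.repr u).support.Nonempty := Finsupp.support_nonempty_iff.mpr hrepr
  obtain ⟨α₁, hα₁, hsup⟩ := Finset.exists_mem_eq_sup _ hne
    (fun α => ‖b.repr u α‖₊ * r ^ deg α)
  set S := (b.repr u).support.filter
    (fun α => ‖b.repr u α‖₊ * r ^ deg α = pbwNorm b r u) with hS
  have hSne : S.Nonempty := ⟨α₁, Finset.mem_filter.mpr ⟨hα₁, by rw [pbwNorm_def, hsup]⟩⟩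
  obtain ⟨α₀, hα₀S, hmax⟩ := Finset.exists_max_image S rho hSne
  obtain ⟨hα₀mem, hα₀eq⟩ := Finset.mem_filter.mp hα₀S
  exact ⟨α₀, hα₀mem, hα₀eq, fun α hαmem hαeq =>
    hmax α (Finset.mem_filter.mpr ⟨hαmem, hαeq⟩)⟩

lemma pbw_mul (hint : ∀ i j k, ‖bg.repr ⁅bg i, bg j⁆ k‖ ≤ 1) (r : ℝ≥0) (hr : 1 < r)
    (u v : UniversalEnvelopingAlgebra L 𝔤) :
    pbwNorm b r (u * v) = pbwNorm b r u * pbwNorm b r v := by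
  classical
  rcases eq_or_ne u 0 with rfl | hu
  · rw [zero_mul, pbw_zero, zero_mul]
  rcases eq_or_ne v 0 with rfl | hv
  · rw [mul_zero, pbw_zero, mul_zero]
  refine le_antisymm (pbw_mul_le b bg hb hint r hr u v) ?_
  obtain ⟨α₀, hα₀mem, hα₀eq, hα₀max⟩ := exists_maximizer b r u hu
  obtain ⟨β₀, hβ₀mem, hβ₀eq, hβ₀max⟩ := exists_maximizer b r v hv
  set γ₀ := α₀ + β₀ with hγ₀
  have huα₀ : b.repr u α₀ ≠ 0 := Finsupp.mem_support_iff.mp hα₀mem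
  have hvβ₀ : b.repr v β₀ ≠ 0 := Finsupp.mem_support_iff.mp hβ₀mem
  have hhead_pos : (0 : ℝ≥0) < ‖b.repr u α₀ * b.repr v β₀‖₊ :=
    nnnorm_pos.mpr (mul_ne_zero huα₀ hvβ₀)
  -- strict bound for every other term contributing to the coefficient at γ₀
  have hterm : ∀ p ∈ ((b.repr u).support ×ˢ (b.repr v).support).erase (α₀, β₀),
      ‖b.repr u p.1 * b.repr v p.2 * b.repr (b p.1 * b p.2) γ₀‖₊
        < ‖b.repr u α₀ * b.repr v β₀‖₊ := by
    rintro ⟨α, β⟩ hp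
    obtain ⟨hpne, hpmem⟩ := Finset.mem_erase.mp hp
    obtain ⟨hαmem, hβmem⟩ := Finset.mem_product.mp hpmem
    dsimp only at *
    set D := b.repr (b α * b β) γ₀ with hD
    have hDle : ‖D‖₊ ≤ 1 := by
      rw [← NNReal.coe_le_coe]
      simpa using (lemD b bg hb hint α β γ₀).1
    have hle1 : ‖b.repr u α‖₊ * r ^ deg α ≤ pbwNorm b r u := coeff_le b r u α
    have hle2 : ‖b.repr v β‖₊ * r ^ deg β ≤ pbwNorm b r v := coeff_le b r v β
    by_cases hdeg : deg α + deg β ≤ deg γ₀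
    · have hDeq := (lemD b bg hb hint α β γ₀).2 hdeg
      by_cases he : γ₀ = α + β
      · -- same leading monomial: strictness from maximality of (α₀, β₀)
        rw [hD, hDeq, if_pos he, mul_one, nnnorm_mul, nnnorm_mul]
        have hdegeq : deg α + deg β = deg α₀ + deg β₀ := by
          rw [← deg_add, ← he, hγ₀, deg_add]
        have hprod : (‖b.repr u α‖₊ * ‖b.repr v β‖₊) * r ^ (deg α₀ + deg β₀)
            ≤ (‖b.repr u α₀‖₊ * ‖b.repr v β₀‖₊) * r ^ (deg α₀ + deg β₀) := by
          calc (‖b.repr u α‖₊ * ‖b.repr v β‖₊) * r ^ (deg α₀ + deg β₀)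
              = (‖b.repr u α‖₊ * r ^ deg α) * (‖b.repr v β‖₊ * r ^ deg β) := by
                rw [← hdegeq, pow_add]; ring
            _ ≤ pbwNorm b r u * pbwNorm b r v := mul_le_mul' hle1 hle2
            _ = (‖b.repr u α₀‖₊ * ‖b.repr v β₀‖₊) * r ^ (deg α₀ + deg β₀) := by
                rw [← hα₀eq, ← hβ₀eq, pow_add]; ring
        have hle : ‖b.repr u α‖₊ * ‖b.repr v β‖₊ ≤ ‖b.repr u α₀‖₊ * ‖b.repr v β₀‖₊ :=
          le_of_mul_le_mul_right hprod (pow_pos (zero_lt_one.trans hr) _)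
        refine lt_of_le_of_ne hle ?_
        intro heq
        have hNu0 : pbwNorm b r u ≠ 0 := fun h => hu ((pbw_eq_zero_iff b r hr u).mp h)
        have hNv0 : pbwNorm b r v ≠ 0 := fun h => hv ((pbw_eq_zero_iff b r hr v).mp h)
        have hab : (‖b.repr u α‖₊ * r ^ deg α) * (‖b.repr v β‖₊ * r ^ deg β)
            = pbwNorm b r u * pbwNorm b r v := by
          rw [← hα₀eq, ← hβ₀eq]
          calc (‖b.repr u α‖₊ * r ^ deg α) * (‖b.repr v β‖₊ * r ^ deg β)
              = (‖b.repr u α‖₊ * ‖b.repr v β‖₊) * r ^ (deg α + deg β) := by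
                rw [pow_add]; ring
            _ = (‖b.repr u α₀‖₊ * ‖b.repr v β₀‖₊) * r ^ (deg α₀ + deg β₀) := by
                rw [heq, hdegeq]
            _ = (‖b.repr u α₀‖₊ * r ^ deg α₀) * (‖b.repr v β₀‖₊ * r ^ deg β₀) := by
                rw [pow_add]; ring
        have hfac1 : ‖b.repr u α‖₊ * r ^ deg α = pbwNorm b r u := by
          by_contra hne'
          have hlt' : ‖b.repr u α‖₊ * r ^ deg α < pbwNorm b r u := lt_of_le_of_ne hle1 hne'
          have : (‖b.repr u α‖₊ * r ^ deg α) * (‖b.repr v β‖₊ * r ^ deg β)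
              < pbwNorm b r u * pbwNorm b r v :=
            lt_of_le_of_lt (mul_le_mul_right hle2 _)
              (mul_lt_mul_of_pos_right hlt' (pos_iff_ne_zero.mpr hNv0))
          exact absurd hab (ne_of_lt this)
        have hfac2 : ‖b.repr v β‖₊ * r ^ deg β = pbwNorm b r v := by
          by_contra hne'
          have hlt' : ‖b.repr v β‖₊ * r ^ deg β < pbwNorm b r v := lt_of_le_of_ne hle2 hne'
          have : (‖b.repr u α‖₊ * r ^ deg α) * (‖b.repr v β‖₊ * r ^ deg β)
              < pbwNorm b r u * pbwNorm b r v := by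
            calc (‖b.repr u α‖₊ * r ^ deg α) * (‖b.repr v β‖₊ * r ^ deg β)
                ≤ pbwNorm b r u * (‖b.repr v β‖₊ * r ^ deg β) := mul_le_mul_left hle1 _
              _ < pbwNorm b r u * pbwNorm b r v :=
                  mul_lt_mul_of_pos_left hlt' (pos_iff_ne_zero.mpr hNu0)
          exact absurd hab (ne_of_lt this)
        have hρα : rho α ≤ rho α₀ := hα₀max α hαmem hfac1
        have hρβ : rho β ≤ rho β₀ := hβ₀max β hβmem hfac2
        have hsum : α + β = α₀ + β₀ := by rw [← he]
        rcases eq_or_ne α α₀ with rfl | hαne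
        · exact hpne (by rw [add_left_cancel hsum])
        · have hltα : rho α < rho α₀ := lt_of_le_of_ne hρα (fun h => hαne (rho_inj h))
          have h2 : rho (α + β) < rho (α₀ + β) := rho_add_lt_left hltα
          have h3 : rho (α₀ + β) ≤ rho (α₀ + β₀) := rho_add_le_right hρβ
          rw [hsum] at h2
          exact absurd (lt_of_lt_of_le h2 h3) (lt_irrefl _)
      · rw [hD, hDeq, if_neg he, mul_zero, nnnorm_zero]
        exact hhead_pos
    · -- higher filtration degree: correction terms are strictly smaller since r > 1
      push_neg at hdeg
      have hlt : ‖b.repr u α‖₊ * ‖b.repr v β‖₊ < ‖b.repr u α₀‖₊ * ‖b.repr v β₀‖₊ := by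
        have h1 : (‖b.repr u α‖₊ * ‖b.repr v β‖₊) * r ^ (deg α + deg β)
            ≤ pbwNorm b r u * pbwNorm b r v := by
          calc (‖b.repr u α‖₊ * ‖b.repr v β‖₊) * r ^ (deg α + deg β)
              = (‖b.repr u α‖₊ * r ^ deg α) * (‖b.repr v β‖₊ * r ^ deg β) := by
                rw [pow_add]; ring
            _ ≤ pbwNorm b r u * pbwNorm b r v := mul_le_mul' hle1 hle2
        have h2 : pbwNorm b r u * pbwNorm b r v
            = (‖b.repr u α₀‖₊ * ‖b.repr v β₀‖₊) * r ^ deg γ₀ := by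
          rw [← hα₀eq, ← hβ₀eq, hγ₀, deg_add, pow_add]; ring
        have h3 : (‖b.repr u α₀‖₊ * ‖b.repr v β₀‖₊) * r ^ deg γ₀
            < (‖b.repr u α₀‖₊ * ‖b.repr v β₀‖₊) * r ^ (deg α + deg β) :=
          mul_lt_mul_of_pos_left (pow_lt_pow_right₀ hr hdeg)
            (by rw [← nnnorm_mul]; exact hhead_pos)
        have h4 := lt_of_le_of_lt (h1.trans_eq h2) h3
        exact lt_of_mul_lt_mul_right h4 zero_le
      calc ‖b.repr u α * b.repr v β * D‖₊
          = ‖b.repr u α‖₊ * ‖b.repr v β‖₊ * ‖D‖₊ := by rw [nnnorm_mul, nnnorm_mul]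
        _ ≤ ‖b.repr u α‖₊ * ‖b.repr v β‖₊ := mul_le_of_le_one_right' hDle
        _ < _ := by rw [nnnorm_mul]; exact hlt
  -- the coefficient at γ₀ realizes the product of the norms
  have hkey : ‖b.repr (u * v) γ₀‖₊ = ‖b.repr u α₀ * b.repr v β₀‖₊ := by
    rw [repr_mul b bg hb u v γ₀, ← Finset.sum_product']
    have hmem : (α₀, β₀) ∈ (b.repr u).support ×ˢ (b.repr v).support :=
      Finset.mem_product.mpr ⟨hα₀mem, hβ₀mem⟩
    rw [← Finset.add_sum_erase _ _ hmem]
    have hD0 : b.repr (b α₀ * b β₀) γ₀ = 1 := by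
      rw [(lemD b bg hb hint α₀ β₀ γ₀).2 (by rw [hγ₀, deg_add]), if_pos rfl]
    have htail : ‖∑ p ∈ ((b.repr u).support ×ˢ (b.repr v).support).erase (α₀, β₀),
        b.repr u p.1 * b.repr v p.2 * b.repr (b p.1 * b p.2) γ₀‖₊
        < ‖b.repr u α₀ * b.repr v β₀‖₊ := by
      refine lt_of_le_of_lt (Finset.nnnorm_sum_le_sup_nnnorm _ _) ?_
      rw [Finset.sup_lt_iff (by exact hhead_pos)]
      intro p hp
      exact hterm p hp
    rw [hD0, mul_one]
    dsimp only
    rw [IsUltrametricDist.nnnorm_add_eq_max_of_nnnorm_ne_nnnorm (ne_of_gt htail)]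
    exact max_eq_left htail.le
  have hfin : pbwNorm b r u * pbwNorm b r v = ‖b.repr (u * v) γ₀‖₊ * r ^ deg γ₀ := by
    rw [hkey, nnnorm_mul, ← hα₀eq, ← hβ₀eq, hγ₀, deg_add, pow_add]; ring
  rw [hfin]
  exact coeff_le b r (u * v) γ₀

end PbwAux

/-- with a basis of `𝔤` having integral structure constants and `r > 1`, the
PBW norm `‖·‖_r` on `U(𝔤)` is multiplicative; in particular `U(𝔤)` has no zero divisors. -/
theorem pbwNorm_mul {p : ℕ} [Fact (Nat.Prime p)]
    (L : Type*) [NontriviallyNormedField L] [NormedAlgebra ℚ_[p] L]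
    [FiniteDimensional ℚ_[p] L] [IsUltrametricDist L]
    (𝔤 : Type*) [LieRing 𝔤] [LieAlgebra L 𝔤] {d : ℕ}
    (bg : Module.Basis (Fin d) L 𝔤)
    (hint : ∀ i j k, ‖bg.repr ⁅bg i, bg j⁆ k‖ ≤ 1)
    (b : Module.Basis (Fin d →₀ ℕ) L (UniversalEnvelopingAlgebra L 𝔤))
    (hb : ∀ α : Fin d →₀ ℕ,
      b α = ((List.finRange d).map fun i =>
        (UniversalEnvelopingAlgebra.ι L (bg i) : UniversalEnvelopingAlgebra L 𝔤) ^ α i).prod)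
    (r : ℝ≥0) (hr : 1 < r) :
    (∀ u v : UniversalEnvelopingAlgebra L 𝔤,
        pbwNorm b r (u * v) = pbwNorm b r u * pbwNorm b r v) ∧
    (∀ u v : UniversalEnvelopingAlgebra L 𝔤, u * v = 0 → u = 0 ∨ v = 0) := by
  have hb' : ∀ α : Fin d →₀ ℕ,
      b α = ((List.finRange d).map fun i => PbwAux.X bg i ^ α i).prod := fun α => hb α
  constructor
  · intro u v
    exact PbwAux.pbw_mul b bg hb' hint r hr u v
  · intro u v huv
    by_contra hcon
    push_neg at hcon
    obtain ⟨hu, hv⟩ := hcon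
    have h1 := PbwAux.pbw_mul b bg hb' hint r hr u v
    rw [huv, PbwAux.pbw_zero b r] at h1
    exact (mul_ne_zero (fun h => hu ((PbwAux.pbw_eq_zero_iff b r hr u).mp h))
      (fun h => hv ((PbwAux.pbw_eq_zero_iff b r hr v).mp h))) h1.symm
end

section
/- Let g be a finite-dimensional Lie algebra over a p-adic local field L with basis x_1,...,x_d with integral structure constants. Equip the Chevalley–Eilenberg complex U^• = U(g) ⊗_L Λ^•g with the norms ||Σ_q Σ_{I∈I_q} u_I ⊗ x_I||_r = sup_q r^q sup_{I∈I_q} ||u_I||_r (where I_q ranges over strictly increasing index tuples of length q and x_I = x_{i_1}∧...∧x_{i_q}). Then the Chevalley–Eilenberg differential ∂ = ψ + φ is norm-decreasing: ||∂λ||_r ≤ ||λ||_r for all λ ∈ U^• and all r > 1. -/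
open scoped NNReal

/-- The Chevalley–Eilenberg complex `U^• = U(𝔤) ⊗ Λ^•𝔤`, modelled as functions `I ↦ u_I` on
index sets `I ⊆ {1,…,d}` (so that `λ = Σ_q Σ_{I ∈ I_q} u_I ⊗ x_I`). -/
abbrev CEModel (L : Type*) [NontriviallyNormedField L] (𝔤 : Type*) [LieRing 𝔤]
    [LieAlgebra L 𝔤] (d : ℕ) : Type _ :=
  Finset (Fin d) → UniversalEnvelopingAlgebra L 𝔤

/-- The norm `‖Σ_q Σ_{I∈I_q} u_I ⊗ x_I‖_r = sup_q r^q sup_{I∈I_q} ‖u_I‖_r` on `U^•`. -/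
noncomputable def ceNorm {L : Type*} [NontriviallyNormedField L] {𝔤 : Type*} [LieRing 𝔤]
    [LieAlgebra L 𝔤] {d : ℕ}
    (b : Module.Basis (Fin d →₀ ℕ) L (UniversalEnvelopingAlgebra L 𝔤)) (r : ℝ≥0)
    (l : CEModel L 𝔤 d) : ℝ≥0 :=
  Finset.univ.sup fun I : Finset (Fin d) => r ^ I.card * pbwNorm b r (l I)

/-- The Chevalley–Eilenberg differential `∂ = ψ + φ`, written out in components with respect
to the basis `x_I` of `Λ^•𝔤`:
`φ(u ⊗ x_{i_1}∧…∧x_{i_q}) = Σ_s (−1)^{s+1} u·x_{i_s} ⊗ (omit s)` and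
`ψ(u ⊗ x_{i_1}∧…∧x_{i_q}) = Σ_{s<t} (−1)^{s+t} u ⊗ [x_{i_s},x_{i_t}]∧(omit s,t)`, where the
bracket is expanded via the structure constants `c_{stk} = (bg.repr ⁅x_s, x_t⁆) k` and the
wedge `x_k ∧ x_{I∖{s,t}}` is rewritten in terms of the ordered basis (with its sign, and
vanishing when `k ∈ I∖{s,t}`). -/
noncomputable def ceDiff {L : Type*} [NontriviallyNormedField L] {𝔤 : Type*} [LieRing 𝔤]
    [LieAlgebra L 𝔤] {d : ℕ} (bg : Module.Basis (Fin d) L 𝔤)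
    (l : CEModel L 𝔤 d) : CEModel L 𝔤 d := fun J =>
  -- the φ-part
  (∑ j : Fin d, if j ∈ J then 0 else
    ((-1 : L) ^ (J.filter (· < j)).card) •
      (l (insert j J) * (UniversalEnvelopingAlgebra.ι L (bg j) : UniversalEnvelopingAlgebra L 𝔤)))
  +
  -- the ψ-part
  ∑ k : Fin d, if k ∈ J then
    ∑ s : Fin d, ∑ t : Fin d,
      if s < t ∧ s ∉ J.erase k ∧ t ∉ J.erase k then
        (((-1 : L) ^ ((((insert s (insert t (J.erase k))).filter (· < s)).card + 1)
              + (((insert s (insert t (J.erase k))).filter (· < t)).card + 1)))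
          * bg.repr ⁅bg s, bg t⁆ k
          * (-1 : L) ^ (((J.erase k)).filter (· < k)).card) •
            l (insert s (insert t (J.erase k)))
      else 0
  else 0


section ListLemma
variable {M : Type*} [Monoid M] {d : ℕ}

lemma ce_prod_mul_aux (x : M) : ∀ (l : List (Fin d)) (f g : Fin d → M) (j : Fin d),
    l.Pairwise (· < ·) → j ∈ l →
    (∀ i, j < i → f i = 1 ∧ g i = 1) → (∀ i, i ≠ j → g i = f i) → g j = f j * x →
    (l.map f).prod * x = (l.map g).prod := by
  intro l
  induction l with
  | nil => intro f g j _ hj; simp at hj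
  | cons a l ih =>
    intro f g j hpw hj h1 h2 h3
    rw [List.pairwise_cons] at hpw
    rcases List.mem_cons.mp hj with rfl | hj'
    · have hf : (l.map f).prod = 1 := by
        apply List.prod_eq_one
        intro x hx
        rcases List.mem_map.mp hx with ⟨i, hi, rfl⟩
        exact (h1 i (hpw.1 i hi)).1
      have hg : (l.map g).prod = 1 := by
        apply List.prod_eq_one
        intro x hx
        rcases List.mem_map.mp hx with ⟨i, hi, rfl⟩
        exact (h1 i (hpw.1 i hi)).2
      simp [hf, hg, h3]
    · have haj : a < j := hpw.1 j hj'
      have hga : g a = f a := h2 a (ne_of_lt haj)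
      simp only [List.map_cons, List.prod_cons, mul_assoc, hga]
      rw [ih f g j hpw.2 hj' h1 h2 h3]

end ListLemma

section Aux

variable {L : Type*} [NontriviallyNormedField L]
  {𝔤 : Type*} [LieRing 𝔤] [LieAlgebra L 𝔤] {d : ℕ}

/-- degree of a multi-index -/
def ceDeg (α : Fin d →₀ ℕ) : ℕ := α.sum fun _ n => n

lemma ceDeg_add (α β : Fin d →₀ ℕ) : ceDeg (α + β) = ceDeg α + ceDeg β :=
  Finsupp.sum_add_index' (fun _ => rfl) (fun _ _ _ => rfl)

lemma ceDeg_single (j : Fin d) (n : ℕ) : ceDeg (Finsupp.single j n) = n :=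
  Finsupp.sum_single_index rfl

variable (bg : Module.Basis (Fin d) L 𝔤)
  (b : Module.Basis (Fin d →₀ ℕ) L (UniversalEnvelopingAlgebra L 𝔤))

/-- ordered case: multiplying by a generator past-the-end just bumps the exponent -/
lemma ce_mul_gen_ordered (hb : ∀ α : Fin d →₀ ℕ,
      b α = ((List.finRange d).map fun i =>
        (UniversalEnvelopingAlgebra.ι L (bg i) : UniversalEnvelopingAlgebra L 𝔤) ^ α i).prod)
    (α : Fin d →₀ ℕ) (j : Fin d) (h : ∀ i, j < i → α i = 0) :
    b α * UniversalEnvelopingAlgebra.ι L (bg j) = b (α + Finsupp.single j 1) := by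
  rw [hb α, hb (α + Finsupp.single j 1)]
  apply ce_prod_mul_aux _ _ _ _ j
  · exact (List.pairwise_lt_finRange d)
  · exact List.mem_finRange j
  · intro i hi
    constructor
    · rw [h i hi]; exact pow_zero _
    · rw [Finsupp.add_apply, h i hi, Finsupp.single_apply_eq_zero.mpr (fun hij => absurd hij.symm (ne_of_lt hi))]
      exact pow_zero _
  · intro i hij
    rw [Finsupp.add_apply, Finsupp.single_apply, if_neg (fun hh => hij hh.symm), add_zero]
  · rw [Finsupp.add_apply, Finsupp.single_eq_same, pow_succ]


variable {b}

lemma pbw_point (r : ℝ≥0) (u : UniversalEnvelopingAlgebra L 𝔤) (α : Fin d →₀ ℕ) :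
    ‖b.repr u α‖₊ * r ^ ceDeg α ≤ pbwNorm b r u := by
  by_cases h : α ∈ (b.repr u).support
  · exact Finset.le_sup (f := fun α => ‖b.repr u α‖₊ * r ^ (α.sum fun _ n => n)) h
  · rw [Finsupp.notMem_support_iff.mp h]
    simp

lemma pbw_le {r : ℝ≥0} {u : UniversalEnvelopingAlgebra L 𝔤} {C : ℝ≥0}
    (h : ∀ α, ‖b.repr u α‖₊ * r ^ ceDeg α ≤ C) : pbwNorm b r u ≤ C :=
  Finset.sup_le fun α _ => h α

lemma pbw_zero (r : ℝ≥0) : pbwNorm b r 0 = 0 := by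
  simp [pbwNorm]

lemma pbw_basis_le (r : ℝ≥0) (γ : Fin d →₀ ℕ) : pbwNorm b r (b γ) ≤ r ^ ceDeg γ := by
  apply pbw_le
  intro α
  rw [b.repr_self, Finsupp.single_apply]
  by_cases h : γ = α
  · subst h; simp
  · rw [if_neg h]; simp

lemma pbw_smul_le (r : ℝ≥0) (c : L) (u : UniversalEnvelopingAlgebra L 𝔤) :
    pbwNorm b r (c • u) ≤ ‖c‖₊ * pbwNorm b r u := by
  apply pbw_le
  intro α
  rw [map_smul, Finsupp.smul_apply, smul_eq_mul, nnnorm_mul, mul_assoc]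
  exact mul_le_mul_right (pbw_point r u α) _

section Ultra
variable [IsUltrametricDist L]

lemma pbw_sum_le {ι : Type*} (r : ℝ≥0) {s : Finset ι}
    {f : ι → UniversalEnvelopingAlgebra L 𝔤} {C : ℝ≥0}
    (h : ∀ i ∈ s, pbwNorm b r (f i) ≤ C) : pbwNorm b r (∑ i ∈ s, f i) ≤ C := by
  apply pbw_le
  intro α
  rw [map_sum, Finsupp.finset_sum_apply]
  calc ‖∑ i ∈ s, b.repr (f i) α‖₊ * r ^ ceDeg α
      ≤ (s.sup fun i => ‖b.repr (f i) α‖₊) * r ^ ceDeg α :=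
        mul_le_mul_left (s.nnnorm_sum_le_sup_nnnorm _) _
    _ = s.sup fun i => ‖b.repr (f i) α‖₊ * r ^ ceDeg α := NNReal.finset_sup_mul s _ _
    _ ≤ C := Finset.sup_le fun i hi => (pbw_point r (f i) α).trans (h i hi)

lemma pbw_sum_le_sup {ι : Type*} (r : ℝ≥0) (s : Finset ι)
    (f : ι → UniversalEnvelopingAlgebra L 𝔤) :
    pbwNorm b r (∑ i ∈ s, f i) ≤ s.sup fun i => pbwNorm b r (f i) :=
  pbw_sum_le r fun i hi => Finset.le_sup (f := fun i => pbwNorm b r (f i)) hi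

lemma pbw_add_le_max (r : ℝ≥0) (u v : UniversalEnvelopingAlgebra L 𝔤) :
    pbwNorm b r (u + v) ≤ max (pbwNorm b r u) (pbwNorm b r v) := by
  apply pbw_le
  intro α
  rw [map_add, Finsupp.add_apply]
  calc ‖b.repr u α + b.repr v α‖₊ * r ^ ceDeg α
      ≤ max ‖b.repr u α‖₊ ‖b.repr v α‖₊ * r ^ ceDeg α :=
        mul_le_mul_left (IsUltrametricDist.nnnorm_add_le_max _ _) _
    _ = max (‖b.repr u α‖₊ * r ^ ceDeg α) (‖b.repr v α‖₊ * r ^ ceDeg α) :=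
        max_mul_of_nonneg _ _ zero_le
    _ ≤ _ := max_le_max (pbw_point r u α) (pbw_point r v α)

end Ultra

/-- Good n u : u is an integral combination of basis monomials of degree ≤ n -/
def IsGood (b : Module.Basis (Fin d →₀ ℕ) L (UniversalEnvelopingAlgebra L 𝔤)) (n : ℕ)
    (u : UniversalEnvelopingAlgebra L 𝔤) : Prop :=
  ∀ γ, ‖b.repr u γ‖₊ ≤ 1 ∧ (b.repr u γ ≠ 0 → ceDeg γ ≤ n)

lemma isGood_zero (n : ℕ) : IsGood b n (0 : UniversalEnvelopingAlgebra L 𝔤) := by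
  intro γ; simp

lemma isGood_mono {n m : ℕ} (h : n ≤ m) {u : UniversalEnvelopingAlgebra L 𝔤}
    (hu : IsGood b n u) : IsGood b m u :=
  fun γ => ⟨(hu γ).1, fun hne => ((hu γ).2 hne).trans h⟩

lemma isGood_smul_basis {n : ℕ} {c : L} (hc : ‖c‖₊ ≤ 1) {γ : Fin d →₀ ℕ}
    (hγ : ceDeg γ ≤ n) : IsGood b n (c • b γ) := by
  intro δ
  rw [map_smul, b.repr_self, Finsupp.smul_apply, Finsupp.single_apply]
  by_cases h : γ = δ
  · subst h; simpa using ⟨hc, fun _ => hγ⟩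
  · rw [if_neg h]; simp

section Ultra2
variable [IsUltrametricDist L]

lemma isGood_add {n : ℕ} {u v : UniversalEnvelopingAlgebra L 𝔤}
    (hu : IsGood b n u) (hv : IsGood b n v) : IsGood b n (u + v) := by
  intro γ
  rw [map_add, Finsupp.add_apply]
  refine ⟨(IsUltrametricDist.nnnorm_add_le_max _ _).trans (max_le (hu γ).1 (hv γ).1), ?_⟩
  intro hne
  by_cases h : b.repr u γ = 0
  · exact (hv γ).2 (by rw [h, zero_add] at hne; exact hne)
  · exact (hu γ).2 h

lemma isGood_smul {n : ℕ} {c : L} (hc : ‖c‖₊ ≤ 1) {u : UniversalEnvelopingAlgebra L 𝔤}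
    (hu : IsGood b n u) : IsGood b n (c • u) := by
  intro γ
  rw [map_smul, Finsupp.smul_apply, smul_eq_mul, nnnorm_mul]
  exact ⟨(mul_le_mul' hc (hu γ).1).trans (by norm_num),
    fun hne => (hu γ).2 fun h => hne (by rw [h, mul_zero])⟩

lemma isGood_sum {ι : Type*} {n : ℕ} {s : Finset ι}
    {f : ι → UniversalEnvelopingAlgebra L 𝔤} (h : ∀ i ∈ s, IsGood b n (f i)) :
    IsGood b n (∑ i ∈ s, f i) := by
  classical
  induction s using Finset.induction_on with
  | empty => simpa using isGood_zero n
  | insert _ _ hx ih =>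
    rw [Finset.sum_insert hx]
    exact isGood_add (h _ (Finset.mem_insert_self _ _))
      (ih fun i hi => h i (Finset.mem_insert_of_mem hi))

omit [IsUltrametricDist L] in
lemma isGood_pbw_le {n : ℕ} {u : UniversalEnvelopingAlgebra L 𝔤} (hu : IsGood b n u)
    {r : ℝ≥0} (hr : 1 ≤ r) : pbwNorm b r u ≤ r ^ n := by
  apply pbw_le
  intro α
  by_cases h : b.repr u α = 0
  · rw [h]; simp
  · calc ‖b.repr u α‖₊ * r ^ ceDeg α ≤ 1 * r ^ n :=
        mul_le_mul' (hu α).1 (pow_le_pow_right' hr ((hu α).2 h))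
      _ = r ^ n := one_mul _

end Ultra2

lemma ce_mul_eq_sum (u x : UniversalEnvelopingAlgebra L 𝔤) :
    u * x = ∑ γ ∈ (b.repr u).support, (b.repr u γ) • (b γ * x) := by
  conv_lhs => rw [← b.linearCombination_repr u]
  rw [Finsupp.linearCombination_apply, Finsupp.sum, Finset.sum_mul]
  simp [smul_mul_assoc]

lemma isGood_basis {n : ℕ} {γ : Fin d →₀ ℕ} (hγ : ceDeg γ ≤ n) : IsGood b n (b γ) := by
  have := isGood_smul_basis (b := b) (c := (1 : L)) (by simp) hγ
  simpa using this

section Main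
variable [IsUltrametricDist L]

theorem ce_straighten
    (hint : ∀ i j k, ‖bg.repr ⁅bg i, bg j⁆ k‖ ≤ 1)
    (hb : ∀ α : Fin d →₀ ℕ,
      b α = ((List.finRange d).map fun i =>
        (UniversalEnvelopingAlgebra.ι L (bg i) : UniversalEnvelopingAlgebra L 𝔤) ^ α i).prod) :
    ∀ n (α : Fin d →₀ ℕ), ceDeg α = n → ∀ j, ∃ v, IsGood b n v ∧
      b α * UniversalEnvelopingAlgebra.ι L (bg j)
        = b (α + Finsupp.single j 1) + v := by
  intro n
  induction n using Nat.strong_induction_on with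
  | _ n IH =>
  have G : ∀ m, m < n → ∀ u, IsGood b m u → ∀ j,
      IsGood b (m + 1) (u * UniversalEnvelopingAlgebra.ι L (bg j)) := by
    intro m hm u hu j
    rw [ce_mul_eq_sum]
    apply isGood_sum
    intro γ hγ
    have hdeg : ceDeg γ ≤ m := (hu γ).2 (Finsupp.mem_support_iff.mp hγ)
    obtain ⟨v, hv, he⟩ := IH (ceDeg γ) (lt_of_le_of_lt hdeg hm) γ rfl j
    rw [he]
    refine isGood_smul (hu γ).1 (isGood_add (isGood_basis ?_) (isGood_mono ?_ hv))
    · rw [ceDeg_add, ceDeg_single]; omega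
    · omega
  intro α hα j
  by_cases hcase : ∀ i, j < i → α i = 0
  · exact ⟨0, isGood_zero n, by rw [ce_mul_gen_ordered bg b hb α j hcase, add_zero]⟩
  push_neg at hcase
  obtain ⟨i, hij, hi⟩ := hcase
  have hisup : i ∈ α.support := Finsupp.mem_support_iff.mpr hi
  have hne : α.support.Nonempty := ⟨i, hisup⟩
  set m := α.support.max' hne with hm_def
  have hm_mem : m ∈ α.support := Finset.max'_mem _ _
  have hαm : α m ≠ 0 := Finsupp.mem_support_iff.mp hm_mem
  have hjm : j < m := lt_of_lt_of_le hij (Finset.le_max' _ i hisup)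
  have htop : ∀ i', m < i' → α i' = 0 := by
    intro i' hi'
    by_contra h
    exact absurd (Finset.le_max' _ i' (Finsupp.mem_support_iff.mpr h)) (not_le.mpr hi')
  set β := α - Finsupp.single m 1 with hβ_def
  have hβα : β + Finsupp.single m 1 = α := by
    ext i'
    rw [Finsupp.add_apply, hβ_def, Finsupp.tsub_apply]
    by_cases h : i' = m
    · subst h
      rw [Finsupp.single_eq_same]
      omega
    · rw [Finsupp.single_apply, if_neg (fun hh => h hh.symm)]
      omega
  have hdegβ : ceDeg β + 1 = n := by
    rw [← hα, ← hβα, ceDeg_add, ceDeg_single]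
  have hn' : ceDeg β < n := by omega
  have hβtop : ∀ i', m < i' → β i' = 0 := by
    intro i' hi'
    rw [hβ_def, Finsupp.tsub_apply, htop i' hi']
    exact Nat.zero_sub _
  have hbalpha : b α = b β * UniversalEnvelopingAlgebra.ι L (bg m) := by
    rw [ce_mul_gen_ordered bg b hb β m hβtop, hβα]
  have hcomm : (UniversalEnvelopingAlgebra.ι L (bg m) : UniversalEnvelopingAlgebra L 𝔤) *
        UniversalEnvelopingAlgebra.ι L (bg j)
      = UniversalEnvelopingAlgebra.ι L (bg j) * UniversalEnvelopingAlgebra.ι L (bg m)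
        + UniversalEnvelopingAlgebra.ι L ⁅bg m, bg j⁆ := by
    letI : LieRing (UniversalEnvelopingAlgebra L 𝔤) := LieRing.ofAssociativeRing
    rw [LieHom.map_lie, Ring.lie_def]
    abel
  have hbr : (UniversalEnvelopingAlgebra.ι L ⁅bg m, bg j⁆ : UniversalEnvelopingAlgebra L 𝔤)
      = ∑ k, bg.repr ⁅bg m, bg j⁆ k •
          (UniversalEnvelopingAlgebra.ι L (bg k) : UniversalEnvelopingAlgebra L 𝔤) := by
    conv_lhs => rw [← bg.sum_repr ⁅bg m, bg j⁆]
    simp only [← LieHom.coe_toLinearMap, map_sum, map_smul]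
  obtain ⟨v₁, hv₁, he₁⟩ := IH (ceDeg β) hn' β rfl j
  have hord2 : b (β + Finsupp.single j 1) * UniversalEnvelopingAlgebra.ι L (bg m)
      = b (β + Finsupp.single j 1 + Finsupp.single m 1) := by
    apply ce_mul_gen_ordered bg b hb
    intro i' hi'
    rw [Finsupp.add_apply, hβtop i' hi', Finsupp.single_apply,
      if_neg (ne_of_lt (lt_trans hjm hi')), add_zero]
  refine ⟨v₁ * UniversalEnvelopingAlgebra.ι L (bg m)
      + ∑ k, bg.repr ⁅bg m, bg j⁆ k • (b β * UniversalEnvelopingAlgebra.ι L (bg k)), ?_, ?_⟩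
  · apply isGood_add
    · have hg := G (ceDeg β) hn' v₁ hv₁ m
      rwa [hdegβ] at hg
    · apply isGood_sum
      intro k _
      obtain ⟨vk, hvk, hek⟩ := IH (ceDeg β) hn' β rfl k
      rw [hek]
      have hck : ‖bg.repr ⁅bg m, bg j⁆ k‖₊ ≤ 1 := by
        rw [← NNReal.coe_le_coe]; simpa using hint m j k
      refine isGood_smul hck (isGood_add (isGood_basis ?_) (isGood_mono ?_ hvk))
      · rw [ceDeg_add, ceDeg_single]; omega
      · omega
  · have haddeq : β + Finsupp.single j 1 + Finsupp.single m 1 = α + Finsupp.single j 1 := by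
      rw [add_right_comm, hβα]
    calc b α * UniversalEnvelopingAlgebra.ι L (bg j)
        = b β * ((UniversalEnvelopingAlgebra.ι L (bg m) : UniversalEnvelopingAlgebra L 𝔤)
            * UniversalEnvelopingAlgebra.ι L (bg j)) := by
          rw [hbalpha, mul_assoc]
      _ = b β * UniversalEnvelopingAlgebra.ι L (bg j) * UniversalEnvelopingAlgebra.ι L (bg m)
          + ∑ k, bg.repr ⁅bg m, bg j⁆ k • (b β * UniversalEnvelopingAlgebra.ι L (bg k)) := by
          rw [hcomm, mul_add, hbr, Finset.mul_sum, ← mul_assoc]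
          simp only [mul_smul_comm]
      _ = b (β + Finsupp.single j 1) * UniversalEnvelopingAlgebra.ι L (bg m)
          + v₁ * UniversalEnvelopingAlgebra.ι L (bg m)
          + ∑ k, bg.repr ⁅bg m, bg j⁆ k • (b β * UniversalEnvelopingAlgebra.ι L (bg k)) := by
          rw [he₁, add_mul]
      _ = b (α + Finsupp.single j 1) + (v₁ * UniversalEnvelopingAlgebra.ι L (bg m)
          + ∑ k, bg.repr ⁅bg m, bg j⁆ k • (b β * UniversalEnvelopingAlgebra.ι L (bg k))) := by
          rw [hord2, haddeq]
          abel

lemma pbw_mul_gen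
    (hint : ∀ i j k, ‖bg.repr ⁅bg i, bg j⁆ k‖ ≤ 1)
    (hb : ∀ α : Fin d →₀ ℕ,
      b α = ((List.finRange d).map fun i =>
        (UniversalEnvelopingAlgebra.ι L (bg i) : UniversalEnvelopingAlgebra L 𝔤) ^ α i).prod)
    {r : ℝ≥0} (hr : 1 ≤ r) (u : UniversalEnvelopingAlgebra L 𝔤) (j : Fin d) :
    pbwNorm b r (u * UniversalEnvelopingAlgebra.ι L (bg j)) ≤ r * pbwNorm b r u := by
  rw [ce_mul_eq_sum]
  apply pbw_sum_le
  intro γ _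
  obtain ⟨v, hv, he⟩ := ce_straighten bg hint hb (ceDeg γ) γ rfl j
  rw [he]
  have hb1 : pbwNorm b r (b (γ + Finsupp.single j 1)) ≤ r ^ (ceDeg γ + 1) := by
    have h2 := pbw_basis_le (b := b) r (γ + Finsupp.single j 1)
    rwa [ceDeg_add, ceDeg_single] at h2
  calc pbwNorm b r (b.repr u γ • (b (γ + Finsupp.single j 1) + v))
      ≤ ‖b.repr u γ‖₊ * pbwNorm b r (b (γ + Finsupp.single j 1) + v) := pbw_smul_le _ _ _
    _ ≤ ‖b.repr u γ‖₊ * r ^ (ceDeg γ + 1) := by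
        apply mul_le_mul_right
        refine (pbw_add_le_max _ _ _).trans (max_le hb1 ?_)
        exact (isGood_pbw_le hv hr).trans (pow_le_pow_right' hr (Nat.le_succ _))
    _ = r * (‖b.repr u γ‖₊ * r ^ ceDeg γ) := by ring
    _ ≤ r * pbwNorm b r u := mul_le_mul_right (pbw_point r u γ) _

end Main
end Aux

lemma le_ceNorm {L : Type*} [NontriviallyNormedField L] {𝔤 : Type*} [LieRing 𝔤]
    [LieAlgebra L 𝔤] {d : ℕ}
    (b : Module.Basis (Fin d →₀ ℕ) L (UniversalEnvelopingAlgebra L 𝔤)) (r : ℝ≥0)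
    (l : CEModel L 𝔤 d) (I : Finset (Fin d)) :
    r ^ I.card * pbwNorm b r (l I) ≤ ceNorm b r l := by
  unfold ceNorm
  exact Finset.le_sup (f := fun I : Finset (Fin d) => r ^ I.card * pbwNorm b r (l I))
    (Finset.mem_univ I)

/-- the Chevalley–Eilenberg differential `∂ = ψ + φ` is norm-decreasing:
`‖∂λ‖_r ≤ ‖λ‖_r` for all `λ ∈ U^•` and all `r > 1`, the basis having integral structure
constants. -/
theorem ceDiff_norm_decreasing {p : ℕ} [Fact (Nat.Prime p)]
    (L : Type*) [NontriviallyNormedField L] [NormedAlgebra ℚ_[p] L]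
    [FiniteDimensional ℚ_[p] L] [IsUltrametricDist L]
    (𝔤 : Type*) [LieRing 𝔤] [LieAlgebra L 𝔤] {d : ℕ}
    (bg : Module.Basis (Fin d) L 𝔤)
    (hint : ∀ i j k, ‖bg.repr ⁅bg i, bg j⁆ k‖ ≤ 1)
    (b : Module.Basis (Fin d →₀ ℕ) L (UniversalEnvelopingAlgebra L 𝔤))
    (hb : ∀ α : Fin d →₀ ℕ,
      b α = ((List.finRange d).map fun i =>
        (UniversalEnvelopingAlgebra.ι L (bg i) : UniversalEnvelopingAlgebra L 𝔤) ^ α i).prod)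
    (r : ℝ≥0) (hr : 1 < r) (l : CEModel L 𝔤 d) :
    ceNorm b r (ceDiff bg l) ≤ ceNorm b r l := by
  have hr1 : (1 : ℝ≥0) ≤ r := hr.le
  apply Finset.sup_le
  intro J _
  have step : ∀ (A B : UniversalEnvelopingAlgebra L 𝔤),
      r ^ J.card * pbwNorm b r A ≤ ceNorm b r l →
      r ^ J.card * pbwNorm b r B ≤ ceNorm b r l →
      r ^ J.card * pbwNorm b r (A + B) ≤ ceNorm b r l := by
    intro A B hA hB
    calc r ^ J.card * pbwNorm b r (A + B)
        = pbwNorm b r (A + B) * r ^ J.card := mul_comm _ _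
      _ ≤ max (pbwNorm b r A) (pbwNorm b r B) * r ^ J.card :=
          mul_le_mul_left (pbw_add_le_max _ _ _) _
      _ = max (pbwNorm b r A * r ^ J.card) (pbwNorm b r B * r ^ J.card) :=
          max_mul_of_nonneg _ _ zero_le
      _ ≤ ceNorm b r l := max_le (by rwa [mul_comm]) (by rwa [mul_comm])
  show r ^ J.card * pbwNorm b r (_ + _) ≤ ceNorm b r l
  apply step
  -- φ-part
  · rw [mul_comm]
    calc pbwNorm b r (∑ j : Fin d, if j ∈ J then 0 else
          ((-1 : L) ^ (J.filter (· < j)).card) •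
            (l (insert j J) * (UniversalEnvelopingAlgebra.ι L (bg j) :
              UniversalEnvelopingAlgebra L 𝔤))) * r ^ J.card
        ≤ (Finset.univ.sup fun j : Fin d => pbwNorm b r (if j ∈ J then 0 else
            ((-1 : L) ^ (J.filter (· < j)).card) •
              (l (insert j J) * (UniversalEnvelopingAlgebra.ι L (bg j) :
                UniversalEnvelopingAlgebra L 𝔤)))) * r ^ J.card := by
          exact mul_le_mul_left (pbw_sum_le_sup r _ _) _
      _ ≤ ceNorm b r l := by
          rw [NNReal.finset_sup_mul]
          apply Finset.sup_le
          intro j _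
          by_cases hj : j ∈ J
          · rw [if_pos hj, pbw_zero, zero_mul]
            exact zero_le
          · rw [if_neg hj]
            have hc : ‖(-1 : L) ^ (J.filter (· < j)).card‖₊ ≤ 1 := by
              rw [nnnorm_pow, nnnorm_neg, nnnorm_one, one_pow]
            calc pbwNorm b r (((-1 : L) ^ (J.filter (· < j)).card) •
                  (l (insert j J) * (UniversalEnvelopingAlgebra.ι L (bg j) :
                    UniversalEnvelopingAlgebra L 𝔤))) * r ^ J.card
                ≤ (1 * (r * pbwNorm b r (l (insert j J)))) * r ^ J.card := by
                  apply mul_le_mul_left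
                  refine (pbw_smul_le _ _ _).trans (mul_le_mul' hc ?_)
                  exact pbw_mul_gen bg hint hb hr1 _ j
              _ = r ^ (insert j J).card * pbwNorm b r (l (insert j J)) := by
                  rw [Finset.card_insert_of_notMem hj, pow_succ, one_mul]
                  ring
              _ ≤ ceNorm b r l := le_ceNorm b r l _
  -- ψ-part
  · rw [mul_comm]
    have inner_bound : ∀ (k s t : Fin d), k ∈ J →
        pbwNorm b r (if s < t ∧ s ∉ J.erase k ∧ t ∉ J.erase k then
          (((-1 : L) ^ ((((insert s (insert t (J.erase k))).filter (· < s)).card + 1)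
                + (((insert s (insert t (J.erase k))).filter (· < t)).card + 1)))
            * bg.repr ⁅bg s, bg t⁆ k
            * (-1 : L) ^ (((J.erase k)).filter (· < k)).card) •
              l (insert s (insert t (J.erase k)))
          else 0) * r ^ J.card ≤ ceNorm b r l := by
      intro k s t hk
      by_cases hst : s < t ∧ s ∉ J.erase k ∧ t ∉ J.erase k
      · rw [if_pos hst]
        set K := insert s (insert t (J.erase k)) with hK
        have hcard : J.card ≤ K.card := by
          have h1 : (insert t (J.erase k)).card = J.card := by
            rw [Finset.card_insert_of_notMem hst.2.2, Finset.card_erase_of_mem hk]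
            have : 1 ≤ J.card := Finset.card_pos.mpr ⟨k, hk⟩
            omega
          calc J.card = (insert t (J.erase k)).card := h1.symm
            _ ≤ K.card := Finset.card_le_card (Finset.subset_insert _ _)
        have hcnorm : ‖((-1 : L) ^ ((((K).filter (· < s)).card + 1)
                + (((K).filter (· < t)).card + 1)))
            * bg.repr ⁅bg s, bg t⁆ k
            * (-1 : L) ^ (((J.erase k)).filter (· < k)).card‖₊ ≤ 1 := by
          rw [nnnorm_mul, nnnorm_mul, nnnorm_pow, nnnorm_pow, nnnorm_neg, nnnorm_one,
            one_pow, one_pow, one_mul, mul_one]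
          rw [← NNReal.coe_le_coe]
          simpa using hint s t k
        calc pbwNorm b r (_ • l K) * r ^ J.card
            ≤ (1 * pbwNorm b r (l K)) * r ^ J.card := by
              apply mul_le_mul_left
              exact (pbw_smul_le _ _ _).trans (mul_le_mul' hcnorm le_rfl)
          _ = r ^ J.card * pbwNorm b r (l K) := by rw [one_mul]; ring
          _ ≤ r ^ K.card * pbwNorm b r (l K) :=
              mul_le_mul_left (pow_le_pow_right' hr1 hcard) _
          _ ≤ ceNorm b r l := le_ceNorm b r l _
      · rw [if_neg hst, pbw_zero, zero_mul]
        exact zero_le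
    calc pbwNorm b r (∑ k : Fin d, _) * r ^ J.card
        ≤ (Finset.univ.sup fun k : Fin d => pbwNorm b r (if k ∈ J then
            ∑ s : Fin d, ∑ t : Fin d,
              if s < t ∧ s ∉ J.erase k ∧ t ∉ J.erase k then
                (((-1 : L) ^ ((((insert s (insert t (J.erase k))).filter (· < s)).card + 1)
                      + (((insert s (insert t (J.erase k))).filter (· < t)).card + 1)))
                  * bg.repr ⁅bg s, bg t⁆ k
                  * (-1 : L) ^ (((J.erase k)).filter (· < k)).card) •
                    l (insert s (insert t (J.erase k)))
              else 0
          else 0)) * r ^ J.card := by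
          exact mul_le_mul_left (pbw_sum_le_sup r _ _) _
      _ ≤ ceNorm b r l := by
          rw [NNReal.finset_sup_mul]
          apply Finset.sup_le
          intro k _
          by_cases hk : k ∈ J
          · rw [if_pos hk]
            have h1 : ∀ s : Fin d, pbwNorm b r (∑ t : Fin d,
                if s < t ∧ s ∉ J.erase k ∧ t ∉ J.erase k then
                  (((-1 : L) ^ ((((insert s (insert t (J.erase k))).filter (· < s)).card + 1)
                        + (((insert s (insert t (J.erase k))).filter (· < t)).card + 1)))
                    * bg.repr ⁅bg s, bg t⁆ k
                    * (-1 : L) ^ (((J.erase k)).filter (· < k)).card) •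
                      l (insert s (insert t (J.erase k)))
                else 0) * r ^ J.card ≤ ceNorm b r l := by
              intro s
              calc pbwNorm b r _ * r ^ J.card
                  ≤ (Finset.univ.sup fun t : Fin d => pbwNorm b r (if s < t ∧ s ∉ J.erase k ∧ t ∉ J.erase k then
                      (((-1 : L) ^ ((((insert s (insert t (J.erase k))).filter (· < s)).card + 1)
                            + (((insert s (insert t (J.erase k))).filter (· < t)).card + 1)))
                        * bg.repr ⁅bg s, bg t⁆ k
                        * (-1 : L) ^ (((J.erase k)).filter (· < k)).card) •
                          l (insert s (insert t (J.erase k)))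
                      else 0)) * r ^ J.card :=
                    mul_le_mul_left (pbw_sum_le_sup r _ _) _
                _ ≤ ceNorm b r l := by
                    rw [NNReal.finset_sup_mul]
                    exact Finset.sup_le fun t _ => inner_bound k s t hk
            calc pbwNorm b r (∑ s : Fin d, _) * r ^ J.card
                ≤ (Finset.univ.sup fun s : Fin d => pbwNorm b r (∑ t : Fin d,
                    if s < t ∧ s ∉ J.erase k ∧ t ∉ J.erase k then
                      (((-1 : L) ^ ((((insert s (insert t (J.erase k))).filter (· < s)).card + 1)
                            + (((insert s (insert t (J.erase k))).filter (· < t)).card + 1)))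
                        * bg.repr ⁅bg s, bg t⁆ k
                        * (-1 : L) ^ (((J.erase k)).filter (· < k)).card) •
                          l (insert s (insert t (J.erase k)))
                    else 0)) * r ^ J.card :=
                  mul_le_mul_left (pbw_sum_le_sup r _ _) _
              _ ≤ ceNorm b r l := by
                  rw [NNReal.finset_sup_mul]
                  exact Finset.sup_le fun s _ => h1 s
          · rw [if_neg hk, pbw_zero, zero_mul]
            exact zero_le
end

section
/- Let L be a nonarchimedean field and V a d-dimensional L-vector space with basis x_1,...,x_d. The standard contracting homotopy s̄ of the augmented Koszul complex S(V) ⊗ Λ^•V → L (defined inductively via the tensor-product decomposition along the lines Lx_j) is norm-decreasing for every Gauss-type norm ||·||_r with r > 1: ||s̄(λ)||_r ≤ ||λ||_r for all λ. -/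
open scoped NNReal

/-- The Gauss norm `‖Σ d_α X^α‖_r = sup ‖d_α‖ r^{|α|}` on `S(V) = L[x_1,…,x_d]`. -/
noncomputable def gaussNormMv {L : Type*} [NontriviallyNormedField L] {d : ℕ} (r : ℝ≥0)
    (f : MvPolynomial (Fin d) L) : ℝ≥0 :=
  f.support.sup fun α => ‖f.coeff α‖₊ * r ^ (α.sum fun _ n => n)

/-- The (total) Koszul complex `S(V) ⊗ Λ^•V` of a `d`-dimensional space `V` with basis
`x_1,…,x_d`, modelled as functions `I ↦ u_I` on index sets `I ⊆ {1,…,d}` (so that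
`λ = Σ_I u_I ⊗ x_I`). -/
abbrev KoszulModel (L : Type*) [NontriviallyNormedField L] (d : ℕ) : Type _ :=
  Finset (Fin d) → MvPolynomial (Fin d) L

/-- The norm `‖Σ_I u_I ⊗ x_I‖_r = sup_I r^{|I|}·‖u_I‖_r` on the Koszul complex. -/
noncomputable def koszulNorm {L : Type*} [NontriviallyNormedField L] {d : ℕ} (r : ℝ≥0)
    (l : KoszulModel L d) : ℝ≥0 :=
  Finset.univ.sup fun I : Finset (Fin d) => r ^ I.card * gaussNormMv r (l I)

/-- The Koszul differential `φ(u ⊗ x_{i_1}∧…∧x_{i_q}) = Σ_s (−1)^{s+1} u·x_{i_s} ⊗ (omit s)`,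
written out in components. -/
noncomputable def koszulDiff {L : Type*} [NontriviallyNormedField L] {d : ℕ}
    (l : KoszulModel L d) : KoszulModel L d := fun J =>
  ∑ j : Fin d, if j ∈ J then 0 else
    ((-1 : L) ^ (J.filter (· < j)).card) •
      (MvPolynomial.X j * l (insert j J))

/-- The standard contracting homotopy `s̄` of the augmented Koszul complex, built inductively
from the rank-one homotopies `s̄₀(x_j^n) = x_j^{n-1} ⊗ x_j` via the tensor-product
decomposition along the lines `L·x_j`; on basis vectors it is given by
`s̄(X^α ⊗ x_I) = X^{α−e_j} ⊗ x_j∧x_I` for `j = min(supp α)` when `min(supp α) < min I`,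
and `0` otherwise. -/
noncomputable def koszulHomotopy {L : Type*} [NontriviallyNormedField L] {d : ℕ}
    (l : KoszulModel L d) : KoszulModel L d := fun I' =>
  if h : I'.Nonempty then
    let j := I'.min' h
    (((l (I'.erase j)).support.filter fun α => α j ≠ 0 ∧ ∀ k, k < j → α k = 0).sum
      fun α => MvPolynomial.monomial (α - Finsupp.single j 1) ((l (I'.erase j)).coeff α))
  else 0

/-- The unit `η : L → S^•`. -/
noncomputable def koszulUnit {L : Type*} [NontriviallyNormedField L] {d : ℕ}
    (c : L) : KoszulModel L d := fun I => if I = ∅ then MvPolynomial.C c else 0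

/-- The augmentation `ε : S^• → L`. -/
noncomputable def koszulAug {L : Type*} [NontriviallyNormedField L] {d : ℕ}
    (l : KoszulModel L d) : L := MvPolynomial.coeff 0 (l ∅)

-- norm lemma test
lemma sub_single_eq_iff {d : ℕ} {j : Fin d} {α β : Fin d →₀ ℕ} (hαj : α j ≠ 0) :
    α - Finsupp.single j 1 = β ↔ α = β + Finsupp.single j 1 := by
  constructor
  · rintro rfl
    exact (tsub_add_cancel_of_le (Finsupp.single_le_iff.mpr (Nat.one_le_iff_ne_zero.mpr hαj))).symm
  · rintro rfl
    exact add_tsub_cancel_right ..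

lemma coeff_koszulHomotopy {L : Type*} [NontriviallyNormedField L] {d : ℕ}
    (l : KoszulModel L d) (I' : Finset (Fin d)) (β : Fin d →₀ ℕ) :
    (koszulHomotopy l I').coeff β =
      if h : I'.Nonempty then
        (if ∀ k < I'.min' h, β k = 0 then
          (l (I'.erase (I'.min' h))).coeff (β + Finsupp.single (I'.min' h) 1) else 0)
      else 0 := by
  unfold koszulHomotopy
  by_cases h : I'.Nonempty
  · simp only [dif_pos h]
    set j := I'.min' h with hj
    rw [MvPolynomial.coeff_sum]
    have hstep : ∀ α ∈ Finset.filter (fun α => α j ≠ 0 ∧ ∀ k < j, α k = 0)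
        (l (I'.erase j)).support,
        MvPolynomial.coeff β ((MvPolynomial.monomial (α - Finsupp.single j 1))
          (MvPolynomial.coeff α (l (I'.erase j)))) =
        if α = β + Finsupp.single j 1 then MvPolynomial.coeff α (l (I'.erase j)) else 0 := by
      intro α hα
      rw [MvPolynomial.coeff_monomial]
      congr 1
      rw [eq_iff_iff]
      exact sub_single_eq_iff (Finset.mem_filter.mp hα).2.1
    rw [Finset.sum_congr rfl hstep, Finset.sum_ite_eq']
    by_cases hmem : β + Finsupp.single j 1 ∈
        Finset.filter (fun α => α j ≠ 0 ∧ ∀ k < j, α k = 0) (l (I'.erase j)).support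
    · rw [if_pos hmem]
      obtain ⟨-, -, hk⟩ := Finset.mem_filter.mp hmem
      rw [if_pos fun k hk' => by
        have := hk k hk'
        rwa [Finsupp.add_apply, Finsupp.single_apply, if_neg hk'.ne', add_zero] at this]
    · rw [if_neg hmem]
      by_cases hc : ∀ k < j, β k = 0
      · rw [if_pos hc]
        by_cases hz : MvPolynomial.coeff (β + Finsupp.single j 1) (l (I'.erase j)) = 0
        · exact hz.symm
        · exact absurd (Finset.mem_filter.mpr ⟨MvPolynomial.mem_support_iff.mpr hz,
            by simp [Finsupp.add_apply, Finsupp.single_apply],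
            fun k hk => by
              rw [Finsupp.add_apply, Finsupp.single_apply, if_neg hk.ne', add_zero]
              exact hc k hk⟩) hmem
      · rw [if_neg hc]
  · simp [h]

lemma degree_add_single {d : ℕ} (β : Fin d →₀ ℕ) (j : Fin d) :
    ((β + Finsupp.single j 1).sum fun _ n => n) = (β.sum fun _ n => n) + 1 := by
  rw [Finsupp.sum_add_index' (fun _ => rfl) (fun _ _ _ => rfl),
    Finsupp.sum_single_index rfl]

lemma koszulHomotopy_norm_le {L : Type*} [NontriviallyNormedField L] {d : ℕ}
    (r : ℝ≥0) (l : KoszulModel L d) :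
    koszulNorm r (koszulHomotopy l) ≤ koszulNorm r l := by
  unfold koszulNorm
  refine Finset.sup_le fun I' _ => ?_
  by_cases h : I'.Nonempty
  · set j := I'.min' h with hj
    unfold gaussNormMv
    rw [NNReal.mul_finset_sup]
    refine Finset.sup_le fun β hβ => ?_
    have hβ' := MvPolynomial.mem_support_iff.mp hβ
    rw [coeff_koszulHomotopy, dif_pos h] at hβ'
    by_cases hc : ∀ k < I'.min' h, β k = 0
    swap
    · rw [if_neg hc] at hβ'; exact absurd rfl hβ'
    rw [if_pos hc] at hβ'
    have hcoeff : (koszulHomotopy l I').coeff β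
        = (l (I'.erase j)).coeff (β + Finsupp.single j 1) := by
      rw [coeff_koszulHomotopy, dif_pos h, if_pos hc]
    have hcard : I'.card = (I'.erase j).card + 1 := by
      rw [Finset.card_erase_of_mem (I'.min'_mem h)]
      have := Finset.card_pos.mpr h
      omega
    rw [hcoeff]
    calc r ^ I'.card * (‖(l (I'.erase j)).coeff (β + Finsupp.single j 1)‖₊
            * r ^ (β.sum fun _ n => n))
        = r ^ (I'.erase j).card * (‖(l (I'.erase j)).coeff (β + Finsupp.single j 1)‖₊
            * r ^ ((β + Finsupp.single j 1).sum fun _ n => n)) := by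
          rw [degree_add_single, hcard]; ring
      _ ≤ r ^ (I'.erase j).card * ((l (I'.erase j)).support.sup
            fun α => ‖(l (I'.erase j)).coeff α‖₊ * r ^ (α.sum fun _ n => n)) := by
          gcongr
          exact Finset.le_sup (f := fun α => ‖(l (I'.erase j)).coeff α‖₊
            * r ^ (α.sum fun _ n => n)) (MvPolynomial.mem_support_iff.mpr hβ')
      _ ≤ _ := Finset.le_sup (f := fun I => r ^ I.card * (l I).support.sup
            fun α => ‖(l I).coeff α‖₊ * r ^ (α.sum fun _ n => n)) (Finset.mem_univ (I'.erase j))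
  · simp [koszulHomotopy, h, gaussNormMv]

lemma coeff_koszulDiff {L : Type*} [NontriviallyNormedField L] {d : ℕ}
    (l : KoszulModel L d) (J : Finset (Fin d)) (β : Fin d →₀ ℕ) :
    (koszulDiff l J).coeff β = ∑ i : Fin d, if i ∈ J then 0 else
      ((-1 : L) ^ (J.filter (· < i)).card) *
        (if β i ≠ 0 then (l (insert i J)).coeff (β - Finsupp.single i 1) else 0) := by
  unfold koszulDiff
  rw [MvPolynomial.coeff_sum]
  refine Finset.sum_congr rfl fun i _ => ?_
  by_cases hi : i ∈ J
  · simp [hi]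
  · rw [if_neg hi, if_neg hi, MvPolynomial.coeff_smul, MvPolynomial.coeff_X_mul', smul_eq_mul]
    congr 1
    simp [Finsupp.mem_support_iff]

lemma sumA {M : Type*} [AddCommMonoid M] {d : ℕ} (β : Fin d →₀ ℕ) (c : M) :
    ∑ i : Fin d, (if β i ≠ 0 ∧ ∀ k < i, β k = 0 then c else 0)
      = if β = 0 then 0 else c := by
  by_cases hb : β = 0
  · subst hb; simp
  · rw [if_neg hb]
    have hS : (Finset.univ.filter fun k : Fin d => β k ≠ 0).Nonempty := by
      obtain ⟨k, hk⟩ := Finsupp.ne_iff.mp hb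
      exact ⟨k, Finset.mem_filter.mpr ⟨Finset.mem_univ _, by simpa using hk⟩⟩
    set i₀ := (Finset.univ.filter fun k : Fin d => β k ≠ 0).min' hS with hi₀
    have hmem := (Finset.univ.filter fun k : Fin d => β k ≠ 0).min'_mem hS
    rw [Finset.mem_filter] at hmem
    rw [Finset.sum_eq_single i₀]
    · rw [if_pos ⟨hmem.2, fun k hk => by
        by_contra hkk
        exact absurd (Finset.min'_le _ k (Finset.mem_filter.mpr ⟨Finset.mem_univ _, hkk⟩))
          (not_le.mpr hk)⟩]
    · intro i _ hi
      rw [if_neg]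
      rintro ⟨h1, h2⟩
      have : i₀ ≤ i := Finset.min'_le _ i (Finset.mem_filter.mpr ⟨Finset.mem_univ _, h1⟩)
      exact hmem.2 (h2 i₀ (lt_of_le_of_ne this (Ne.symm hi)))
    · exact fun h => absurd (Finset.mem_univ i₀) h

lemma sumB {M : Type*} [AddCommMonoid M] {d : ℕ} (β : Fin d →₀ ℕ) (j : Fin d) (c : M) :
    ∑ i : Fin d, (if i = j then (if ∀ k < j, β k = 0 then c else 0)
      else if i < j ∧ β i ≠ 0 ∧ ∀ k < i, β k = 0 then c else 0) = c := by
  by_cases hc : ∀ k < j, β k = 0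
  · rw [Finset.sum_eq_single j]
    · rw [if_pos rfl, if_pos hc]
    · intro i _ hi
      rw [if_neg hi, if_neg]
      rintro ⟨h1, h2, -⟩
      exact h2 (hc i h1)
    · exact fun h => absurd (Finset.mem_univ j) h
  · have hS : (Finset.univ.filter fun k : Fin d => k < j ∧ β k ≠ 0).Nonempty := by
      push_neg at hc
      obtain ⟨k, hk1, hk2⟩ := hc
      exact ⟨k, Finset.mem_filter.mpr ⟨Finset.mem_univ _, hk1, hk2⟩⟩
    set i₀ := (Finset.univ.filter fun k : Fin d => k < j ∧ β k ≠ 0).min' hS with hi₀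
    have hmem := (Finset.univ.filter fun k : Fin d => k < j ∧ β k ≠ 0).min'_mem hS
    rw [Finset.mem_filter] at hmem
    rw [Finset.sum_eq_single i₀]
    · rw [if_neg (ne_of_lt hmem.2.1), if_pos ⟨hmem.2.1, hmem.2.2, fun k hk => by
        by_contra hkk
        exact absurd (Finset.min'_le _ k (Finset.mem_filter.mpr
          ⟨Finset.mem_univ _, hk.trans hmem.2.1, hkk⟩)) (not_le.mpr hk)⟩]
    · intro i _ hi
      by_cases hij : i = j
      · rw [if_pos hij, if_neg hc]
      · rw [if_neg hij, if_neg]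
        rintro ⟨h1, h2, h3⟩
        have : i₀ ≤ i := Finset.min'_le _ i (Finset.mem_filter.mpr ⟨Finset.mem_univ _, h1, h2⟩)
        exact hmem.2.2 (h3 i₀ (lt_of_le_of_ne this (Ne.symm hi)))
    · exact fun h => absurd (Finset.mem_univ i₀) h

lemma index_eq {d : ℕ} (β : Fin d →₀ ℕ) {i j : Fin d} (hij : j ≠ i) :
    (β - Finsupp.single i 1) + Finsupp.single j 1
      = (β + Finsupp.single j 1) - Finsupp.single i 1 := by
  ext k
  simp only [Finsupp.add_apply, Finsupp.tsub_apply, Finsupp.single_apply]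
  rcases eq_or_ne i k with rfl | hik
  · rw [if_neg hij]; omega
  · rw [if_neg hik]; omega

lemma ite_sum {M α : Type*} [AddCommMonoid M] {c : Prop} [Decidable c] {s : Finset α}
    (f : α → M) : (if c then ∑ i ∈ s, f i else 0) = ∑ i ∈ s, (if c then f i else 0) := by
  split_ifs with h
  · rfl
  · exact Finset.sum_const_zero.symm

lemma min'_insert_lt {d : ℕ} {i : Fin d} {J : Finset (Fin d)}
    (hmin : ∀ k ∈ J, i < k) :
    (insert i J).min' (Finset.insert_nonempty i J) = i := by
  refine le_antisymm (Finset.min'_le _ i (Finset.mem_insert_self i J)) (Finset.le_min' _ _ _ ?_)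
  intro y hy
  rcases Finset.mem_insert.mp hy with rfl | hy
  · exact le_rfl
  · exact (hmin y hy).le

lemma min'_insert_gt {d : ℕ} {i j : Fin d} {J : Finset (Fin d)} (hjJ : j ∈ J)
    (hmin : ∀ k ∈ J, j ≤ k) (hij : j < i) :
    (insert i J).min' (Finset.insert_nonempty i J) = j := by
  refine le_antisymm (Finset.min'_le _ j (Finset.mem_insert_of_mem hjJ)) (Finset.le_min' _ _ _ ?_)
  intro y hy
  rcases Finset.mem_insert.mp hy with rfl | hy
  · exact hij.le
  · exact hmin y hy

lemma sub_single_cond {d : ℕ} (β : Fin d →₀ ℕ) {i m : Fin d} (him : m ≤ i) :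
    (∀ k < m, ((β - Finsupp.single i 1) : Fin d →₀ ℕ) k = 0) ↔ ∀ k < m, β k = 0 := by
  refine forall₂_congr fun k hk => ?_
  rw [Finsupp.tsub_apply, Finsupp.single_apply, if_neg (lt_of_lt_of_le hk him).ne',
    Nat.sub_zero]

lemma koszulIdentity {L : Type*} [NontriviallyNormedField L] {d : ℕ}
    (l : KoszulModel L d) :
    koszulDiff (koszulHomotopy l) + koszulHomotopy (koszulDiff l)
      = l - koszulUnit (koszulAug l) := by
  funext J
  apply MvPolynomial.ext
  intro β
  rw [Pi.add_apply, Pi.sub_apply, MvPolynomial.coeff_add, MvPolynomial.coeff_sub]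
  rcases eq_or_ne J ∅ with rfl | hJne
  · -- J = ∅
    rw [coeff_koszulDiff, coeff_koszulHomotopy, dif_neg Finset.not_nonempty_empty, add_zero]
    have hunit : (koszulUnit (koszulAug l) (∅ : Finset (Fin d))).coeff β
        = if β = 0 then (l ∅).coeff 0 else 0 := by
      unfold koszulUnit koszulAug
      rw [if_pos rfl, MvPolynomial.coeff_C]
      simp [eq_comm]
    rw [hunit]
    have key : ∀ i ∈ (Finset.univ : Finset (Fin d)),
        (if i ∈ (∅ : Finset (Fin d)) then 0 else
          ((-1 : L) ^ ((∅ : Finset (Fin d)).filter (· < i)).card) *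
            (if β i ≠ 0 then (koszulHomotopy l (insert i ∅)).coeff (β - Finsupp.single i 1)
              else 0))
        = if β i ≠ 0 ∧ ∀ k < i, β k = 0 then (l ∅).coeff β else 0 := by
      intro i _
      rw [if_neg (Finset.notMem_empty i), Finset.filter_empty, Finset.card_empty, pow_zero,
        one_mul, coeff_koszulHomotopy, dif_pos (Finset.insert_nonempty i ∅),
        min'_insert_lt (fun k hk => absurd hk (Finset.notMem_empty k)),
        Finset.erase_insert (Finset.notMem_empty i)]
      by_cases hb : β i ≠ 0
      · rw [if_pos hb]
        simp only [sub_single_cond β (le_refl i)]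
        by_cases hk : ∀ k < i, β k = 0
        · rw [if_pos hk, if_pos ⟨hb, hk⟩, tsub_add_cancel_of_le
            (Finsupp.single_le_iff.mpr (Nat.one_le_iff_ne_zero.mpr hb))]
        · rw [if_neg hk, if_neg (fun h => hk h.2)]
      · rw [if_neg hb, if_neg (fun h => hb h.1)]
    rw [Finset.sum_congr rfl key, sumA]
    by_cases hb : β = 0
    · subst hb; rw [if_pos rfl, if_pos rfl, sub_self]
    · rw [if_neg hb, if_neg hb, sub_zero]
  · -- J nonempty
    have hJ : J.Nonempty := Finset.nonempty_iff_ne_empty.mpr hJne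
    set j := J.min' hJ with hj
    have hjJ : j ∈ J := J.min'_mem hJ
    have hjmin : ∀ k ∈ J, j ≤ k := fun k hk => J.min'_le k hk
    have hunit : (koszulUnit (koszulAug l) J).coeff β = 0 := by
      unfold koszulUnit koszulAug
      rw [if_neg hJne, MvPolynomial.coeff_zero]
    rw [hunit, sub_zero, coeff_koszulDiff, coeff_koszulHomotopy, dif_pos hJ,
      coeff_koszulDiff l (J.erase (J.min' hJ))]
    rw [ite_sum]
    rw [← Finset.sum_add_distrib]
    simp only [← hj]
    have key : ∀ i ∈ (Finset.univ : Finset (Fin d)),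
        ((if i ∈ J then 0 else
          ((-1 : L) ^ (J.filter (· < i)).card) *
            (if β i ≠ 0 then (koszulHomotopy l (insert i J)).coeff (β - Finsupp.single i 1)
              else 0))
        + (if ∀ k < j, β k = 0 then
          (if i ∈ J.erase (j) then 0 else
          ((-1 : L) ^ ((J.erase (j)).filter (· < i)).card) *
            (if ((β + Finsupp.single (j) 1 : Fin d →₀ ℕ)) i ≠ 0 then
              (l (insert i (J.erase (j)))).coeff
                ((β + Finsupp.single (j) 1) - Finsupp.single i 1) else 0)) else 0))
        = if i = j then (if ∀ k < j, β k = 0 then (l J).coeff β else 0)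
          else if i < j ∧ β i ≠ 0 ∧ ∀ k < i, β k = 0 then (l J).coeff β else 0 := by
      intro i _
      rcases lt_trichotomy i j with hij | hij | hij
      · -- i < j
        have hiJ : i ∉ J := fun h => absurd (hjmin i h) (not_le.mpr hij)
        have hfilter : J.filter (· < i) = ∅ :=
          Finset.filter_eq_empty_iff.mpr
            (fun k hk => not_lt.mpr ((hij.trans_le (hjmin k hk)).le))
        have hbi : ((β + Finsupp.single j 1 : Fin d →₀ ℕ)) i = β i := by
          rw [Finsupp.add_apply, Finsupp.single_apply, if_neg hij.ne', add_zero]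
        rw [if_neg hiJ, hfilter, Finset.card_empty, pow_zero, one_mul, if_neg hij.ne,
          if_neg (fun h => hiJ (Finset.mem_of_mem_erase h)),
          coeff_koszulHomotopy, dif_pos (Finset.insert_nonempty i J),
          min'_insert_lt (fun k hk => hij.trans_le (hjmin k hk)),
          Finset.erase_insert hiJ]
        simp only [sub_single_cond β (le_refl i), hbi]
        by_cases hb : β i ≠ 0
        · rw [if_pos hb, tsub_add_cancel_of_le
            (Finsupp.single_le_iff.mpr (Nat.one_le_iff_ne_zero.mpr hb)),
            if_neg (c := ∀ k < j, β k = 0) (fun hc => hb (hc i hij))]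
          by_cases hk : ∀ k < i, β k = 0
          · rw [if_pos hk, if_pos ⟨hij, hb, hk⟩, add_zero]
          · rw [if_neg hk, if_neg (c := i < j ∧ β i ≠ 0 ∧ ∀ k < i, β k = 0) (fun h => hk h.2.2), add_zero]
        · rw [if_neg hb, if_neg hb, mul_zero, ite_self, add_zero,
            if_neg (c := i < j ∧ β i ≠ 0 ∧ ∀ k < i, β k = 0) (fun h => hb h.2.1)]
      · -- i = j
        subst hij
        have hfilter : (J.erase j).filter (· < j) = ∅ :=
          Finset.filter_eq_empty_iff.mpr (fun k hk =>
            not_lt.mpr (hjmin k (Finset.mem_of_mem_erase hk)))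
        have hbi : ((β + Finsupp.single j 1 : Fin d →₀ ℕ)) j ≠ 0 := by
          rw [Finsupp.add_apply, Finsupp.single_apply, if_pos rfl]
          omega
        rw [if_pos hjJ, zero_add, if_pos rfl, if_neg (Finset.notMem_erase j J),
          hfilter, Finset.card_empty, pow_zero, one_mul, if_pos hbi,
          add_tsub_cancel_right, Finset.insert_erase hjJ]
      · -- j < i
        by_cases hiJ : i ∈ J
        · rw [if_pos hiJ, if_pos (Finset.mem_erase.mpr ⟨hij.ne', hiJ⟩), ite_self, add_zero,
            if_neg hij.ne', if_neg (c := i < j ∧ β i ≠ 0 ∧ ∀ k < i, β k = 0) (fun h => absurd h.1 (not_lt.mpr hij.le))]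
        · have hbi : ((β + Finsupp.single j 1 : Fin d →₀ ℕ)) i = β i := by
            rw [Finsupp.add_apply, Finsupp.single_apply, if_neg hij.ne, add_zero]
          have hsgn : (J.filter (· < i)).card = ((J.erase j).filter (· < i)).card + 1 := by
            rw [Finset.filter_erase, Finset.card_erase_of_mem
              (s := J.filter (fun x => x < i)) (a := j) (Finset.mem_filter.mpr ⟨hjJ, hij⟩)]
            have : 0 < (J.filter (· < i)).card :=
              Finset.card_pos.mpr ⟨j, Finset.mem_filter.mpr ⟨hjJ, hij⟩⟩
            omega
          rw [if_neg hiJ, if_neg (fun h => hiJ (Finset.mem_of_mem_erase h)),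
            coeff_koszulHomotopy, dif_pos (Finset.insert_nonempty i J),
            min'_insert_gt hjJ hjmin hij, Finset.erase_insert_of_ne hij.ne',
            if_neg hij.ne', if_neg (c := i < j ∧ β i ≠ 0 ∧ ∀ k < i, β k = 0) (fun h => absurd h.1 (not_lt.mpr hij.le))]
          simp only [sub_single_cond β hij.le, hbi, index_eq β hij.ne]
          rw [hsgn, pow_succ]
          by_cases hc : ∀ k < j, β k = 0
          · rw [if_pos hc, if_pos hc]
            by_cases hb : β i ≠ 0
            · rw [if_pos hb]; ring
            · rw [if_neg hb]; ring
          · rw [if_neg hc, if_neg hc, ite_self, mul_zero, add_zero]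
    rw [Finset.sum_congr rfl key, sumB]

/-- the standard contracting homotopy `s̄` of the augmented Koszul complex
(`∂s̄ + s̄∂ = id − ηε`) is norm-decreasing for every Gauss-type norm `‖·‖_r` with `r > 1`. -/
theorem koszulHomotopy_norm_decreasing {L : Type*} [NontriviallyNormedField L]
    [IsUltrametricDist L] {d : ℕ} :
    (∀ l : KoszulModel L d,
      koszulDiff (koszulHomotopy l) + koszulHomotopy (koszulDiff l)
        = l - koszulUnit (koszulAug l)) ∧
    (∀ (r : ℝ≥0), 1 < r → ∀ l : KoszulModel L d,
      koszulNorm r (koszulHomotopy l) ≤ koszulNorm r l) := by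
  exact ⟨koszulIdentity, fun r _ l => koszulHomotopy_norm_le r l⟩
end
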